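/- arXiv:2306.07237 — 5 statements merged into one kernel-verified Lean document; each statement's English description precedes it below -/
import Mathlib

section
/- Let S be a set of at least 3 points in general position, and let p, q be two distinct points outside conv(S) such that S ∪ {p,q} is in general position. Let x, y be extreme points of S with x seen by p and y seen by q. If the segments px and qy cross in an interior point, then both x and y are seen by both p and q, and the segments py and qx are disjoint. -/
/-- Points in the plane. -/
abbrev Pt := ℝ × ℝ

/-- No three distinct points of `S` are collinear. -/
def GenPos (S : Set Pt) : Prop :=
  ∀ a ∈ S, ∀ b ∈ S, ∀ c ∈ S, a ≠ b → a ≠ c → b ≠ c →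
    ¬ Collinear ℝ ({a, b, c} : Set Pt)

/-- A point `p` outside the hull sees `q ∈ S` if the segment `pq` meets
the convex hull of `S` exactly in `{q}`. -/
def Sees (p q : Pt) (S : Set Pt) : Prop :=
  segment ℝ p q ∩ convexHull ℝ S = {q}

/-- The set of points of `S` seen from `p`. -/
def SeenSet (p : Pt) (S : Set Pt) : Set Pt := {q ∈ S | Sees p q S}

/-- `x` is an extreme point of `S`. -/
def ExtremePt (S : Set Pt) (x : Pt) : Prop := x ∈ S ∧ x ∉ convexHull ℝ (S \ {x})

/-- `ab` is an edge of the boundary of the convex hull of `S`. -/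
def HullEdge (S : Set Pt) (a b : Pt) : Prop :=
  a ∈ S ∧ b ∈ S ∧ a ≠ b ∧ segment ℝ a b ⊆ frontier (convexHull ℝ S)

/-- A list enumerating the extreme points of `S` in cyclic convex-position
order along the boundary of the convex hull. -/
def HullCycle (S : Set Pt) (l : List Pt) : Prop :=
  l.Nodup ∧ {x | x ∈ l} = {x | ExtremePt S x} ∧
    ∀ i < l.length, HullEdge S l[i]! l[(i + 1) % l.length]!

/-- A contiguous arc along the boundary of the hull of `S`
beginning in `a` and ending in `c`. -/
def Arc (S : Set Pt) (a c : Pt) (A : List Pt) : Prop :=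
  ∃ l, HullCycle S l ∧ ∃ k ≤ l.length,
    A = l.take k ∧ A.head? = some a ∧ A.getLast? = some c

/-- The (undirected) edges of the path given by the list `l`. -/
def edgeSet (l : List Pt) : Set (Set Pt) :=
  {e | ∃ p ∈ l.zip l.tail, e = ({p.1, p.2} : Set Pt)}

/-- The straight-line drawing of the path `l` is crossing-free: two edges meet
only in common endpoints. -/
def PlaneList (l : List Pt) : Prop :=
  ∀ i j : ℕ, i < j → j + 1 < l.length →
    segment ℝ l[i]! l[i + 1]! ∩ segment ℝ l[j]! l[j + 1]! ⊆
      ({l[i]!, l[i + 1]!} ∩ {l[j]!, l[j + 1]!} : Set Pt)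

/-- `l` visits every point of `S` exactly once. -/
def IsSpanningPath (S : Set Pt) (l : List Pt) : Prop :=
  l.Nodup ∧ {x | x ∈ l} = S

/-- A crossing-free straight-line spanning path of `S`. -/
def PlaneSpanningPath (S : Set Pt) (l : List Pt) : Prop :=
  IsSpanningPath S l ∧ PlaneList l

/-- Two paths are edge-disjoint if no segment is an edge of both. -/
def EdgeDisjoint (P Q : List Pt) : Prop := ∀ e ∈ edgeSet P, e ∉ edgeSet Q

/-- `S` admits three pairwise edge-disjoint plane spanning paths. -/
def ThreePaths (S : Set Pt) : Prop :=
  ∃ P Q R : List Pt,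
    PlaneSpanningPath S P ∧ PlaneSpanningPath S Q ∧ PlaneSpanningPath S R ∧
    EdgeDisjoint P Q ∧ EdgeDisjoint P R ∧ EdgeDisjoint Q R

/-- `(S₁, S₂)` is a balanced separated partition of `S`. -/
def BSP (S S₁ S₂ : Finset Pt) : Prop :=
  S₁ ∪ S₂ = S ∧ Disjoint S₁ S₂ ∧
  (S₁.card : ℤ) - S₂.card ≤ 1 ∧ (S₂.card : ℤ) - S₁.card ≤ 1 ∧
  Disjoint (convexHull ℝ (S₁ : Set Pt)) (convexHull ℝ (S₂ : Set Pt))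

/-- `ab` is an edge of the visibility graph `V(S₁,S₂)`. -/
def VisEdge (S₁ S₂ : Finset Pt) (a b : Pt) : Prop :=
  a ∈ S₁ ∧ b ∈ S₂ ∧
  segment ℝ a b ∩ (convexHull ℝ (S₁ : Set Pt) ∪ convexHull ℝ (S₂ : Set Pt))
    = ({a, b} : Set Pt)

/-- Two segments cross: their open segments share a point. -/
def SegCross (a b c d : Pt) : Prop :=
  (openSegment ℝ a b ∩ openSegment ℝ c d).Nonempty

/-- Consecutive vertices of `l` alternate between `S₁` and `S₂`. -/
def Alternating (S₁ S₂ : Finset Pt) (l : List Pt) : Prop :=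
  ∀ i, i + 1 < l.length →
    (l[i]! ∈ S₁ ∧ l[i + 1]! ∈ S₂) ∨ (l[i]! ∈ S₂ ∧ l[i + 1]! ∈ S₁)

/-- A zig-zag path for the balanced separated partition `(S₁,S₂)` of `S`. -/
def ZigZag (S S₁ S₂ : Finset Pt) (l : List Pt) : Prop :=
  PlaneSpanningPath (S : Set Pt) l ∧ Alternating S₁ S₂ l

/-- Twice the signed area of the triangle `a b c`; positive iff `c` lies to the
left of the directed line `ab`. -/
def ccw (a b c : Pt) : ℝ :=
  (b.1 - a.1) * (c.2 - a.2) - (b.2 - a.2) * (c.1 - a.1)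

/-- `uv` is a halving segment of `S`: the line through `u` and `v` has exactly
`(|S| - 2)/2` points of `S` strictly on each side. -/
def Halving (S : Finset Pt) (u v : Pt) : Prop :=
  u ∈ S ∧ v ∈ S ∧ u ≠ v ∧
  2 * ((S : Set Pt) ∩ {s | 0 < ccw u v s}).ncard = S.card - 2 ∧
  2 * ((S : Set Pt) ∩ {s | ccw u v s < 0}).ncard = S.card - 2

/-- The wheel configuration: all points but one in convex position, and one
interior point `y` such that every line through `y` and another point of the
configuration halves the remaining points. -/
def IsWheel (S : Finset Pt) : Prop :=
  ∃ y ∈ S,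
    (∀ x ∈ S.erase y, x ∉ convexHull ℝ (((S.erase y : Finset Pt) : Set Pt) \ {x})) ∧
    y ∈ interior (convexHull ℝ ((S.erase y : Finset Pt) : Set Pt)) ∧
    ∀ x ∈ S.erase y, Halving S y x

/-- `v` is a switchable path for the balanced separated partition `(S₁,S₂)` of
`S`: its edges are visibility edges, they cross a separating line of the
partition in order along the line, and every open triangle spanned by three
consecutive vertices contains no point of `S`. -/
def Switchable (S S₁ S₂ : Finset Pt) (v : List Pt) : Prop :=
  2 ≤ v.length ∧
  (∀ i, i + 1 < v.length →
    VisEdge S₁ S₂ v[i]! v[i + 1]! ∨ VisEdge S₁ S₂ v[i + 1]! v[i]!) ∧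
  (∃ (f : Pt →ₗ[ℝ] ℝ) (c : ℝ),
    (∀ x ∈ S₁, f x < c) ∧ (∀ x ∈ S₂, c < f x) ∧
    ∃ x : ℕ → Pt,
      (∀ i, i + 1 < v.length → x i ∈ segment ℝ v[i]! v[i + 1]! ∧ f (x i) = c) ∧
      ∃ g : Pt →ₗ[ℝ] ℝ, ∀ i j, i < j → j + 1 < v.length → g (x i) < g (x j)) ∧
  ∀ i, i + 2 < v.length →
    ∀ s ∈ S, s ∉ interior (convexHull ℝ ({v[i]!, v[i + 1]!, v[i + 2]!} : Set Pt))

/-- `u` is a bridged vertex of the partition `(S₁,S₂)` of `S`: an endpoint of an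
edge of the boundary of `conv S` with one endpoint in each class. -/
def Bridged (S S₁ S₂ : Finset Pt) (u : Pt) : Prop :=
  ∃ w, HullEdge (S : Set Pt) u w ∧
    ((u ∈ S₁ ∧ w ∈ S₂) ∨ (u ∈ S₂ ∧ w ∈ S₁))

/-- `u` is incident with at least two edges of the visibility graph. -/
def IncidentVisEdges2 (S₁ S₂ : Finset Pt) (u : Pt) : Prop :=
  ∃ w₁ w₂, w₁ ≠ w₂ ∧
    (VisEdge S₁ S₂ u w₁ ∨ VisEdge S₁ S₂ w₁ u) ∧
    (VisEdge S₁ S₂ u w₂ ∨ VisEdge S₁ S₂ w₂ u)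

lemma indepAux {p q x : Pt} (h : ¬ Collinear ℝ ({p, q, x} : Set Pt))
    {A B : ℝ} (hE : A • (q - p) + B • (x - p) = 0) : A = 0 ∧ B = 0 := by
  by_contra hc
  apply h
  rw [collinear_iff_of_mem (Set.mem_insert p _)]
  by_cases hB : B = 0
  · have hA : A ≠ 0 := by tauto
    have hqp : q = p := by
      have h0 : A • (q - p) = 0 := by rw [hB] at hE; simpa using hE
      have := (smul_eq_zero.mp h0).resolve_left hA
      exact sub_eq_zero.mp this
    refine ⟨x - p, ?_⟩
    intro r hr
    simp only [Set.mem_insert_iff, Set.mem_singleton_iff] at hr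
    rcases hr with rfl | rfl | hr3
    · exact ⟨0, by simp⟩
    · exact ⟨0, by simp [hqp]⟩
    · exact ⟨1, by simp [hr3]⟩
  · refine ⟨q - p, ?_⟩
    intro r hr
    simp only [Set.mem_insert_iff, Set.mem_singleton_iff] at hr
    rcases hr with rfl | rfl | hr3
    · exact ⟨0, by simp⟩
    · exact ⟨1, by simp⟩
    · refine ⟨-A/B, ?_⟩
      have h1 : B • (x - p) = (-A) • (q - p) := by
        linear_combination (norm := module) hE
      have h2 : x - p = (-A/B) • (q - p) := by
        rw [div_eq_mul_inv, mul_comm, ← smul_smul]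
        rw [← h1, smul_smul, inv_mul_cancel₀ hB, one_smul]
      simp [vadd_eq_add, hr3, ← h2]

lemma seesAux {S : Set Pt} {p q x y z : Pt}
    (hp : p ∉ convexHull ℝ S) (hq : q ∉ convexHull ℝ S)
    (hxp : segment ℝ p x ∩ convexHull ℝ S = {x})
    (hyq : segment ℝ q y ∩ convexHull ℝ S = {y})
    (hz1 : z ∈ openSegment ℝ p x) (hz2 : z ∈ openSegment ℝ q y) :
    segment ℝ p y ∩ convexHull ℝ S = {y} := by
  have hxS : x ∈ convexHull ℝ S := by
    have : x ∈ segment ℝ p x ∩ convexHull ℝ S := by rw [hxp]; rfl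
    exact this.2
  have hyS : y ∈ convexHull ℝ S := by
    have : y ∈ segment ℝ q y ∩ convexHull ℝ S := by rw [hyq]; rfl
    exact this.2
  apply Set.eq_singleton_iff_unique_mem.mpr
  refine ⟨⟨right_mem_segment ℝ p y, hyS⟩, ?_⟩
  rintro w ⟨hwseg, hwhull⟩
  by_contra hwy
  obtain ⟨a, b, ha, hb, hab, hw⟩ := hwseg
  obtain ⟨a₁, b₁, ha₁, hb₁, hab₁, hz1'⟩ := hz1
  obtain ⟨a₂, b₂, ha₂, hb₂, hab₂, hz2'⟩ := hz2
  have hb1' : b₁ < 1 := by linarith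
  have hb2' : b₂ < 1 := by linarith
  have htb0 : 0 < b := by
    rcases lt_or_eq_of_le hb with h | h
    · exact h
    · exfalso; apply hp
      have ha1 : a = 1 := by linarith
      have hwp : w = p := by rw [← hw, ← h, ha1]; simp
      rwa [hwp] at hwhull
  have htb1 : b < 1 := by
    rcases lt_or_eq_of_le (by linarith : b ≤ 1) with h | h
    · exact h
    · exfalso; apply hwy
      have ha0 : a = 0 := by linarith
      rw [← hw, h, ha0]; simp
  set D : ℝ := 1 - b * b₁ with hDdef
  have hD : 0 < D := by rw [hDdef]; nlinarith
  have hDne : D ≠ 0 := ne_of_gt hD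
  have hDinv : 0 < D⁻¹ := inv_pos.mpr hD
  have key : (1-b₁) • w + ((1-b)*b₁) • x = (1-b) • z + ((1-b₁)*b) • y := by
    rw [← hw, ← hz1']
    have h1 : a = 1 - b := by linarith
    have h2 : a₁ = 1 - b₁ := by linarith
    rw [h1, h2]; module
  set c : Pt := D⁻¹ • ((1-b₁) • w + ((1-b)*b₁) • x) with hcdef
  have hchull : c ∈ convexHull ℝ S := by
    have hmem := (convex_convexHull ℝ S) hwhull hxS
      (le_of_lt (mul_pos hDinv (by linarith : (0:ℝ) < 1 - b₁)))
      (le_of_lt (mul_pos hDinv (mul_pos (by linarith : (0:ℝ) < 1 - b) hb₁)))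
      (by rw [← mul_add, show (1-b₁) + (1-b)*b₁ = D by rw [hDdef]; ring]; exact inv_mul_cancel₀ hDne)
    have heqc : (D⁻¹*(1-b₁)) • w + (D⁻¹*((1-b)*b₁)) • x = c := by
      rw [hcdef, smul_add, smul_smul, smul_smul]
    rwa [heqc] at hmem
  have hc' : c = D⁻¹ • ((1-b) • (a₂ • q + b₂ • y) + ((1-b₁)*b) • y) := by
    rw [hcdef, key, hz2']
  set A₁ : ℝ := D⁻¹*((1-b)*a₂) with hA1def
  set A₂ : ℝ := D⁻¹*((1-b)*b₂ + (1-b₁)*b) with hA2def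
  have hA1 : 0 < A₁ := by
    rw [hA1def]; exact mul_pos hDinv (mul_pos (by linarith) ha₂)
  have hA2 : 0 ≤ A₂ := by
    rw [hA2def]
    have : (0:ℝ) ≤ (1-b)*b₂ + (1-b₁)*b := by nlinarith
    exact mul_nonneg (le_of_lt hDinv) this
  have hsum : A₁ + A₂ = 1 := by
    rw [hA1def, hA2def, ← mul_add, show (1-b)*a₂ + ((1-b)*b₂ + (1-b₁)*b) = D by rw [hDdef]; linear_combination (1-b) * hab₂]; exact inv_mul_cancel₀ hDne
  have heq : A₁ • q + A₂ • y = c := by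
    rw [hc', hA1def, hA2def]; module
  have hcy : c = y := by
    have hcm : c ∈ segment ℝ q y ∩ convexHull ℝ S :=
      ⟨⟨A₁, A₂, le_of_lt hA1, hA2, hsum, heq⟩, hchull⟩
    rwa [hyq] at hcm
  have hqy : q = y := by
    have hA2' : A₂ = 1 - A₁ := by linarith
    have h5 : A₁ • q + (1 - A₁) • y = y := by rw [← hA2', heq, hcy]
    have h6 : A₁ • q = A₁ • y := by linear_combination (norm := module) h5
    exact smul_right_injective Pt hA1.ne' h6
  exact hq (hqy ▸ hyS)

theorem stmt_1 (S : Finset Pt) (h3 : 3 ≤ S.card) (p q x y : Pt) (hpq : p ≠ q)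
    (hp : p ∉ convexHull ℝ (S : Set Pt)) (hq : q ∉ convexHull ℝ (S : Set Pt))
    (hgp : GenPos ((S : Set Pt) ∪ {p, q}))
    (hx : ExtremePt (S : Set Pt) x) (hy : ExtremePt (S : Set Pt) y)
    (hxp : Sees p x (S : Set Pt)) (hyq : Sees q y (S : Set Pt))
    (hcross : SegCross p x q y) :
    Sees p y (S : Set Pt) ∧ Sees q x (S : Set Pt) ∧
      segment ℝ p y ∩ segment ℝ q x = ∅ := by
  obtain ⟨z, hz1, hz2⟩ := hcross
  have hxS : x ∈ convexHull ℝ (S : Set Pt) := subset_convexHull ℝ _ hx.1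
  have hyS : y ∈ convexHull ℝ (S : Set Pt) := subset_convexHull ℝ _ hy.1
  have hpy : Sees p y (S : Set Pt) := seesAux hp hq hxp hyq hz1 hz2
  have hqx : Sees q x (S : Set Pt) := seesAux hq hp hyq hxp hz2 hz1
  refine ⟨hpy, hqx, ?_⟩
  have hcol : ¬ Collinear ℝ ({p, q, x} : Set Pt) := by
    refine hgp p (Or.inr (by simp)) q (Or.inr (by simp)) x (Or.inl hx.1) hpq ?_ ?_
    · rintro rfl; exact hp hxS
    · rintro rfl; exact hq hxS
  rw [Set.eq_empty_iff_forall_notMem]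
  rintro w ⟨hw1, hw2⟩
  obtain ⟨a₁, b₁, ha₁, hb₁, hab₁, hz1'⟩ := hz1
  obtain ⟨a₂, b₂, ha₂, hb₂, hab₂, hz2'⟩ := hz2
  obtain ⟨a₃, b₃, ha₃, hb₃, hab₃, hw1'⟩ := hw1
  obtain ⟨a₄, b₄, ha₄, hb₄, hab₄, hw2'⟩ := hw2
  have e1 : a₁ = 1 - b₁ := by linarith
  have e2 : a₂ = 1 - b₂ := by linarith
  have e3 : a₃ = 1 - b₃ := by linarith
  have e4 : a₄ = 1 - b₄ := by linarith
  rw [e1] at hz1'; rw [e2] at hz2'; rw [e3] at hw1'; rw [e4] at hw2'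
  have h1 : b₁ • (x - p) = (1 - b₂) • (q - p) + b₂ • (y - p) := by
    linear_combination (norm := module) hz1' - hz2'
  have h2 : b₃ • (y - p) = (1 - b₄) • (q - p) + b₄ • (x - p) := by
    linear_combination (norm := module) hw1' - hw2'
  have hE : (b₂*(1-b₄) + b₃*(1-b₂)) • (q - p) + (b₂*b₄ - b₃*b₁) • (x - p) = 0 := by
    linear_combination (norm := module) (-b₂) • h2 - b₃ • h1
  obtain ⟨hA, hB⟩ := indepAux hcol hE
  have hb4 : b₄ = 1 := by nlinarith
  have hb3 : b₃ = 0 := by nlinarith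
  rw [hb4, hb3] at hB
  nlinarith
end

section
/- Let S be a set of at least 3 points in general position and let p, q be two distinct points outside conv(S) with S ∪ {p,q} in general position. Suppose |S(p) ∪ S(q)| ≥ 3, where S(p), S(q) are the sets of points of S seen from p and q respectively. Then for any point c ∈ S(q), there exist a ∈ S(p) and b ∈ S(q) \ {c} such that the segments ap and bq are disjoint. -/
lemma seg_mem_iff {x y z : Pt} :
    z ∈ segment ℝ x y ↔ ∃ t : ℝ, 0 ≤ t ∧ t ≤ 1 ∧
      z.1 = (1 - t) * x.1 + t * y.1 ∧ z.2 = (1 - t) * x.2 + t * y.2 := by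
  rw [segment_eq_image]
  constructor
  · rintro ⟨t, ⟨ht0, ht1⟩, rfl⟩
    exact ⟨t, ht0, ht1, by simp [smul_eq_mul], by simp [smul_eq_mul]⟩
  · rintro ⟨t, ht0, ht1, h1, h2⟩
    refine ⟨t, ⟨ht0, ht1⟩, ?_⟩
    apply Prod.ext <;> simp [smul_eq_mul, h1, h2]

lemma collinear_of_ccw_zero {a b c : Pt} (h : ccw a b c = 0) :
    Collinear ℝ ({a, b, c} : Set Pt) := by
  by_cases hba : b = a
  · subst hba
    have : ({b, b, c} : Set Pt) = {b, c} := by simp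
    rw [this]; exact collinear_pair ℝ b c
  · rw [collinear_iff_of_mem (Set.mem_insert a {b, c})]
    refine ⟨b - a, fun x hx => ?_⟩
    simp only [Set.mem_insert_iff, Set.mem_singleton_iff] at hx
    rcases hx with rfl | rfl | rfl
    · exact ⟨0, by simp⟩
    · exact ⟨1, by simp⟩
    · by_cases hb1 : b.1 - a.1 ≠ 0
      · refine ⟨(x.1 - a.1)/(b.1 - a.1), ?_⟩
        have h2 : (x.1 - a.1)/(b.1 - a.1) * (b.2 - a.2) = x.2 - a.2 := by
          field_simp
          simp only [ccw] at h
          linear_combination -h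
        apply Prod.ext
        · show x.1 = (x.1 - a.1)/(b.1 - a.1) * (b - a).1 + a.1
          have : (b - a).1 = b.1 - a.1 := rfl
          rw [this]; field_simp; ring
        · show x.2 = (x.1 - a.1)/(b.1 - a.1) * (b - a).2 + a.2
          have : (b - a).2 = b.2 - a.2 := rfl
          rw [this, h2]; ring
      · push_neg at hb1
        have hb2 : b.2 - a.2 ≠ 0 := by
          intro h2
          apply hba
          apply Prod.ext <;> [skip; skip] <;> linarith
        have hx1 : x.1 = a.1 := by
          simp only [ccw, hb1] at h
          have : (b.2 - a.2) * (x.1 - a.1) = 0 := by linarith [h]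
          rcases mul_eq_zero.1 this with h' | h'
          · exact absurd h' hb2
          · linarith
        refine ⟨(x.2 - a.2)/(b.2 - a.2), ?_⟩
        apply Prod.ext
        · show x.1 = (x.2 - a.2)/(b.2 - a.2) * (b - a).1 + a.1
          have : (b - a).1 = b.1 - a.1 := rfl
          rw [this, hb1, hx1]; ring
        · show x.2 = (x.2 - a.2)/(b.2 - a.2) * (b - a).2 + a.2
          have : (b - a).2 = b.2 - a.2 := rfl
          rw [this]; field_simp; ring

lemma cevian {A B C y x : Pt} (hy : y ∈ segment ℝ A B) (hx : x ∈ segment ℝ A C) :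
    ∃ w, w ∈ segment ℝ C y ∧ w ∈ segment ℝ B x := by
  rcases seg_mem_iff.1 hy with ⟨s, hs0, hs1, hy1, hy2⟩
  rcases seg_mem_iff.1 hx with ⟨t, ht0, ht1, hx1, hx2⟩
  by_cases hst : s * t = 1
  · have hs : s = 1 := by nlinarith
    have ht : t = 1 := by nlinarith
    have hyB : y = B := by
      apply Prod.ext
      · rw [hy1, hs]; ring
      · rw [hy2, hs]; ring
    have hxC : x = C := by
      apply Prod.ext
      · rw [hx1, ht]; ring
      · rw [hx2, ht]; ring
    exact ⟨B, by rw [hyB]; exact right_mem_segment ℝ C B,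
      by rw [hxC]; exact left_mem_segment ℝ B C⟩
  · have hst1 : s * t < 1 := lt_of_le_of_ne (by nlinarith) hst
    have hd : (0:ℝ) < 1 - s * t := by linarith
    set u : ℝ := (1 - t) / (1 - s * t) with hu
    set v : ℝ := (1 - s) / (1 - s * t) with hv
    have hu0 : 0 ≤ u := div_nonneg (by linarith) hd.le
    have hv0 : 0 ≤ v := div_nonneg (by linarith) hd.le
    refine ⟨(1-u) • C + u • y, ?_, ?_⟩
    · apply seg_mem_iff.2
      refine ⟨u, hu0, by rw [hu, div_le_one hd]; nlinarith, ?_, ?_⟩ <;>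
        simp [smul_eq_mul]
    · apply seg_mem_iff.2
      refine ⟨v, hv0, by rw [hv, div_le_one hd]; nlinarith, ?_, ?_⟩
      · have e1 : ((1-u) • C + u • y).1 = (1-u) * C.1 + u * y.1 := by simp [smul_eq_mul]
        rw [e1, hy1, hx1, hu, hv]
        have hw : (1 - s*t)⁻¹ * (1 - s*t) = 1 := inv_mul_cancel₀ hd.ne'
        simp only [div_eq_mul_inv]
        linear_combination (B.1 - C.1) * hw
      · have e1 : ((1-u) • C + u • y).2 = (1-u) * C.2 + u * y.2 := by simp [smul_eq_mul]
        rw [e1, hy2, hx2, hu, hv]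
        have hw : (1 - s*t)⁻¹ * (1 - s*t) = 1 := inv_mul_cancel₀ hd.ne'
        simp only [div_eq_mul_inv]
        linear_combination (B.2 - C.2) * hw

lemma between_collapse {m x r e : Pt} (h1 : e ∈ segment ℝ m x) (h2 : x ∈ segment ℝ r e)
    (hne : x ≠ e) : e ∈ segment ℝ r m := by
  rcases seg_mem_iff.1 h1 with ⟨α, ha0, ha1, he1, he2⟩
  rcases seg_mem_iff.1 h2 with ⟨β, hb0, hb1, hx1, hx2⟩
  by_cases hab : α * β = 1
  · have hA : α = 1 := by nlinarith
    have hB : β = 1 := by nlinarith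
    exact absurd (Prod.ext (by rw [hx1, hB]; ring) (by rw [hx2, hB]; ring)) hne
  · have hab1 : α * β < 1 := lt_of_le_of_ne (by nlinarith) hab
    have hd : (0:ℝ) < 1 - α * β := by linarith
    apply seg_mem_iff.2
    refine ⟨(1 - α)/(1 - α*β), div_nonneg (by linarith) hd.le,
      by rw [div_le_one hd]; nlinarith, ?_, ?_⟩
    · field_simp
      linear_combination he1 + α * hx1
    · field_simp
      linear_combination he2 + α * hx2

lemma vis_transfer {S : Set Pt} {r r' e m : Pt}
    (hm : m ∈ convexHull ℝ S)
    (hsee : segment ℝ r e ∩ convexHull ℝ S = {e})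
    {y : Pt} (hy1 : y ∈ segment ℝ r e) (hy2 : y ∈ segment ℝ r' m)
    (hnc : e ∉ segment ℝ r' m) :
    segment ℝ r' e ∩ convexHull ℝ S = {e} := by
  have heH : e ∈ convexHull ℝ S := by
    have : e ∈ segment ℝ r e ∩ convexHull ℝ S := by rw [hsee]; exact rfl
    exact this.2
  apply Set.eq_singleton_iff_unique_mem.2
  refine ⟨⟨right_mem_segment ℝ r' e, heH⟩, ?_⟩
  rintro x ⟨hx1, hx2⟩
  obtain ⟨w, hw1, hw2⟩ := cevian hy2 hx1
  have hwre : w ∈ segment ℝ r e :=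
    (convex_segment r e).segment_subset (right_mem_segment ℝ r e) hy1 hw1
  have hwH : w ∈ convexHull ℝ S :=
    (convex_convexHull ℝ S).segment_subset hm hx2 hw2
  have hwe : w = e := by
    have hmem : w ∈ segment ℝ r e ∩ convexHull ℝ S := ⟨hwre, hwH⟩
    rw [hsee] at hmem; exact hmem
  by_contra hxe
  exact hnc (between_collapse (hwe ▸ hw2) hx1 hxe)

lemma tangent_visible (S : Finset Pt) (r a : Pt) (ha : a ∈ S) (σ : ℝ)
    (hs : ∀ s ∈ S, s ≠ a → σ * ccw r a s < 0) :
    Sees r a (S : Set Pt) := by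
  classical
  -- the halfspace
  have hlin : IsLinearMap ℝ (fun x : Pt => σ*(a.1-r.1)*x.2 - σ*(a.2-r.2)*x.1) := by
    constructor
    · intro u v; simp only [Prod.fst_add, Prod.snd_add]; ring
    · intro c u; simp only [Prod.smul_fst, Prod.smul_snd, smul_eq_mul]; ring
  have hconvH : Convex ℝ {x : Pt |
      σ*(a.1-r.1)*x.2 - σ*(a.2-r.2)*x.1 ≤ σ*(a.1-r.1)*r.2 - σ*(a.2-r.2)*r.1} :=
    convex_halfSpace_le hlin _
  have hseteq : {x : Pt | σ*(a.1-r.1)*x.2 - σ*(a.2-r.2)*x.1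
      ≤ σ*(a.1-r.1)*r.2 - σ*(a.2-r.2)*r.1} = {x : Pt | σ * ccw r a x ≤ 0} := by
    ext x
    simp only [Set.mem_setOf_eq, ccw]
    constructor <;> intro h <;> nlinarith [h]
  have hsub : convexHull ℝ (S : Set Pt) ⊆ {x : Pt | σ * ccw r a x ≤ 0} := by
    rw [← hseteq]
    apply convexHull_min _ hconvH
    rw [hseteq]
    intro s hsS
    simp only [Set.mem_setOf_eq]
    by_cases h : s = a
    · subst h
      have : ccw r s s = 0 := by simp only [ccw]; ring
      rw [this]; simp
    · exact le_of_lt (hs s (by exact_mod_cast hsS) h)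
  -- equality case
  have hker : ∀ x ∈ convexHull ℝ (S : Set Pt), σ * ccw r a x = 0 → x = a := by
    intro x hx h0
    rw [Finset.convexHull_eq] at hx
    obtain ⟨w, hw0, hw1, hwx⟩ := hx
    rw [Finset.centerMass_eq_of_sum_1 _ _ hw1] at hwx
    have hx1 : x.1 = ∑ y ∈ S, w y * y.1 := by
      rw [← hwx, Prod.fst_sum]
      exact Finset.sum_congr rfl fun y _ => by simp [smul_eq_mul]
    have hx2 : x.2 = ∑ y ∈ S, w y * y.2 := by
      rw [← hwx, Prod.snd_sum]
      exact Finset.sum_congr rfl fun y _ => by simp [smul_eq_mul]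
    have hexp : ∑ y ∈ S, w y * (σ * ccw r a y)
        = σ*(a.1-r.1)*(∑ y ∈ S, w y * y.2) - σ*(a.2-r.2)*(∑ y ∈ S, w y * y.1)
          + (σ*(a.2-r.2)*r.1 - σ*(a.1-r.1)*r.2) * (∑ y ∈ S, w y) := by
      rw [Finset.mul_sum, Finset.mul_sum, Finset.mul_sum, ← Finset.sum_sub_distrib,
        ← Finset.sum_add_distrib]
      exact Finset.sum_congr rfl fun y _ => by simp only [ccw]; ring
    rw [← hx1, ← hx2, hw1] at hexp
    have hsum : ∑ y ∈ S, w y * (σ * ccw r a y) = 0 := by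
      rw [hexp]
      simp only [ccw] at h0
      linear_combination h0
    have hzero : ∀ y ∈ S, w y * (σ * ccw r a y) = 0 := by
      refine (Finset.sum_eq_zero_iff_of_nonpos ?_).1 hsum
      intro y hy
      by_cases hya : y = a
      · subst hya
        have : ccw r y y = 0 := by simp only [ccw]; ring
        rw [this]; simp
      · exact mul_nonpos_iff.2 (Or.inl ⟨hw0 y hy, (hs y hy hya).le⟩)
    have hwy : ∀ y ∈ S, y ≠ a → w y = 0 := by
      intro y hy hya
      rcases mul_eq_zero.1 (hzero y hy) with h | h
      · exact h
      · exact absurd h (ne_of_lt (hs y hy hya))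
    have hwa : w a = 1 := by
      rw [← hw1]
      exact (Finset.sum_eq_single a (fun y hy hya => hwy y hy hya)
        (fun h => absurd ha h)).symm
    apply Prod.ext
    · rw [hx1, Finset.sum_eq_single a (fun y hy hya => by rw [hwy y hy hya]; ring)
        (fun h => absurd ha h), hwa]; ring
    · rw [hx2, Finset.sum_eq_single a (fun y hy hya => by rw [hwy y hy hya]; ring)
        (fun h => absurd ha h), hwa]; ring
  -- conclude
  unfold Sees
  apply Set.eq_singleton_iff_unique_mem.2
  refine ⟨⟨right_mem_segment ℝ r a, subset_convexHull ℝ _ (by exact_mod_cast ha)⟩, ?_⟩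
  rintro x ⟨hx1, hx2⟩
  apply hker x hx2
  rcases seg_mem_iff.1 hx1 with ⟨t, _, _, h1, h2⟩
  simp only [ccw, h1, h2]; ring

lemma two_seen (S : Finset Pt) (h2 : 2 ≤ S.card) (r : Pt)
    (hr : r ∉ convexHull ℝ (S : Set Pt))
    (hcc : ∀ s ∈ S, ∀ s' ∈ S, s ≠ s' → ccw r s s' ≠ 0) :
    ∃ a ∈ SeenSet r (S : Set Pt), ∃ a' ∈ SeenSet r (S : Set Pt), a ≠ a' := by
  classical
  have hne : S.Nonempty := Finset.card_pos.1 (by omega)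
  have hcl : IsClosed (convexHull ℝ (S : Set Pt)) :=
    (S.finite_toSet.isCompact_convexHull ℝ).isClosed
  obtain ⟨f, u0, hfu, hfS⟩ :=
    geometric_hahn_banach_point_closed (convex_convexHull ℝ _) hcl hr
  set u : Pt := (f (1,0), f (0,1)) with hudef
  have hf : ∀ x : Pt, f x = u.1 * x.1 + u.2 * x.2 := by
    intro x
    have hx : x = x.1 • ((1:ℝ),(0:ℝ)) + x.2 • ((0:ℝ),(1:ℝ)) := by
      apply Prod.ext <;> simp
    calc f x = f (x.1 • ((1:ℝ),(0:ℝ)) + x.2 • ((0:ℝ),(1:ℝ))) := by rw [← hx]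
    _ = x.1 * f (1,0) + x.2 * f (0,1) := by
        rw [map_add, map_smul, map_smul]; simp [smul_eq_mul]
    _ = u.1 * x.1 + u.2 * x.2 := by rw [hudef]; ring
  have hpos : ∀ s ∈ S, 0 < u.1*(s.1-r.1) + u.2*(s.2-r.2) := by
    intro s hsS
    have h2' : u0 < f s := hfS s (subset_convexHull ℝ _ (by exact_mod_cast hsS))
    have e1 := hf r
    have e2 := hf s
    nlinarith [hfu]
  have hu2 : 0 < u.1^2 + u.2^2 := by
    obtain ⟨s0, hs0⟩ := hne
    by_contra h
    push_neg at h
    have h1 : u.1 = 0 := by nlinarith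
    have h2' : u.2 = 0 := by nlinarith
    have := hpos s0 hs0
    rw [h1, h2'] at this
    norm_num at this
  set τ : Pt → ℝ := fun s =>
    (-u.2*(s.1-r.1) + u.1*(s.2-r.2)) / (u.1*(s.1-r.1) + u.2*(s.2-r.2)) with hτ
  have key : ∀ a ∈ S, ∀ s ∈ S, ccw r a s * (u.1^2+u.2^2)
      = (u.1*(a.1-r.1) + u.2*(a.2-r.2)) * (u.1*(s.1-r.1) + u.2*(s.2-r.2)) * (τ s - τ a) := by
    intro a ha s hs
    have hda := (hpos a ha).ne'
    have hds := (hpos s hs).ne'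
    rw [hτ]
    simp only [ccw]
    rw [div_sub_div _ _ hds hda, mul_div_assoc', eq_div_iff (mul_ne_zero hds hda)]
    ring
  have hτne : ∀ x ∈ S, ∀ y ∈ S, x ≠ y → τ x ≠ τ y := by
    intro x hx y hy hxy he
    apply hcc x hx y hy hxy
    have := key x hx y hy
    rw [he] at this
    simp at this
    rcases this with h | h
    · exact h
    · exact absurd h (ne_of_gt hu2)
  obtain ⟨a, haS, hamax⟩ := S.exists_max_image τ hne
  obtain ⟨a', ha'S, ha'min⟩ := S.exists_min_image τ hne
  have hstra : ∀ s ∈ S, s ≠ a → (1:ℝ) * ccw r a s < 0 := by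
    intro s hsS hne'
    have hlt : τ s < τ a :=
      lt_of_le_of_ne (hamax s hsS) (hτne s hsS a haS hne')
    have hk := key a haS s hsS
    have hrhs : (u.1*(a.1-r.1) + u.2*(a.2-r.2)) * (u.1*(s.1-r.1) + u.2*(s.2-r.2)) * (τ s - τ a) < 0 :=
      mul_neg_of_pos_of_neg (mul_pos (hpos a haS) (hpos s hsS)) (by linarith)
    rw [← hk] at hrhs
    by_contra hge
    push_neg at hge
    nlinarith [hu2]
  have hstra' : ∀ s ∈ S, s ≠ a' → (-1:ℝ) * ccw r a' s < 0 := by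
    intro s hsS hne'
    have hlt : τ a' < τ s :=
      lt_of_le_of_ne (ha'min s hsS) (hτne a' ha'S s hsS (Ne.symm hne'))
    have hk := key a' ha'S s hsS
    have hrhs : 0 < (u.1*(a'.1-r.1) + u.2*(a'.2-r.2)) * (u.1*(s.1-r.1) + u.2*(s.2-r.2)) * (τ s - τ a') :=
      mul_pos (mul_pos (hpos a' ha'S) (hpos s hsS)) (by linarith)
    rw [← hk] at hrhs
    by_contra hge
    push_neg at hge
    nlinarith [hu2]
  have hSa := tangent_visible S r a haS 1 hstra
  have hSa' := tangent_visible S r a' ha'S (-1) hstra'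
  have haa' : a ≠ a' := by
    obtain ⟨x, hx, y, hy, hxy⟩ := Finset.one_lt_card.1 (show 1 < S.card by omega)
    intro he
    apply hτne x hx y hy hxy
    have h1 : τ x ≤ τ a := hamax x hx
    have h2' : τ a ≤ τ x := he ▸ ha'min x hx
    have h3 : τ y ≤ τ a := hamax y hy
    have h4 : τ a ≤ τ y := he ▸ ha'min y hy
    linarith
  exact ⟨a, ⟨by exact_mod_cast haS, hSa⟩, a', ⟨by exact_mod_cast ha'S, hSa'⟩, haa'⟩

lemma no_double_cross {p q A B : Pt}
    (hγ : ccw p q A ≠ 0) (hδ : ccw p q B ≠ 0) (hε : ccw p A B ≠ 0)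
    (h1 : (segment ℝ p A ∩ segment ℝ q B).Nonempty)
    (h2 : (segment ℝ p B ∩ segment ℝ q A).Nonempty) : False := by
  obtain ⟨z, hz1, hz2⟩ := h1
  rcases seg_mem_iff.1 hz1 with ⟨s, hs0, hs1, e1a, e1b⟩
  rcases seg_mem_iff.1 hz2 with ⟨t, ht0, ht1, f1a, f1b⟩
  obtain ⟨z', hz1', hz2'⟩ := h2
  rcases seg_mem_iff.1 hz1' with ⟨w, hw0, hw1, e2a, e2b⟩
  rcases seg_mem_iff.1 hz2' with ⟨v, hv0, hv1, f2a, f2b⟩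
  have E1 : (1-s)*p.1 + s*A.1 = (1-t)*q.1 + t*B.1 := by rw [← e1a, ← f1a]
  have E2 : (1-s)*p.2 + s*A.2 = (1-t)*q.2 + t*B.2 := by rw [← e1b, ← f1b]
  have E3 : (1-w)*p.1 + w*B.1 = (1-v)*q.1 + v*A.1 := by rw [← e2a, ← f2a]
  have E4 : (1-w)*p.2 + w*B.2 = (1-v)*q.2 + v*A.2 := by rw [← e2b, ← f2b]
  have R1 : (1-t) * ccw p q A = t * ccw p A B := by
    simp only [ccw]
    linear_combination (A.1 - p.1) * E2 - (A.2 - p.2) * E1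
  have R2 : s * ccw p q A = t * ccw p q B := by
    simp only [ccw]
    linear_combination (q.1 - p.1) * E2 - (q.2 - p.2) * E1
  have R3 : (1-v) * ccw p q B + v * ccw p A B = 0 := by
    simp only [ccw]
    linear_combination (B.1 - p.1) * E4 - (B.2 - p.2) * E3
  have ht0' : 0 < t := by
    rcases eq_or_lt_of_le ht0 with h | h
    · exact absurd (by rw [← h] at R1; linarith : ccw p q A = 0) hγ
    · exact h
  have ht1' : t < 1 := by
    rcases eq_or_lt_of_le ht1 with h | h
    · exact absurd (by rw [h] at R1; linarith : ccw p A B = 0) hε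
    · exact h
  have hs0' : 0 < s := by
    rcases eq_or_lt_of_le hs0 with h | h
    · exfalso
      rw [← h] at R2
      have h0 : t * ccw p q B = 0 := by linarith
      exact hδ ((mul_eq_zero.1 h0).resolve_left (ne_of_gt ht0'))
    · exact h
  rcases hγ.lt_or_gt with hg | hg
  · have hε' : ccw p A B < 0 := by
      have h1 : (1-t) * ccw p q A < 0 := mul_neg_of_pos_of_neg (by linarith) hg
      by_contra hge
      push_neg at hge
      have h2 : 0 ≤ t * ccw p A B := mul_nonneg ht0'.le hge
      linarith
    have hδ' : ccw p q B < 0 := by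
      have h1 : s * ccw p q A < 0 := mul_neg_of_pos_of_neg hs0' hg
      by_contra hge
      push_neg at hge
      have h2 : 0 ≤ t * ccw p q B := mul_nonneg ht0'.le hge
      linarith
    have h1 : (1-v) * ccw p q B ≤ 0 :=
      mul_nonpos_iff.2 (Or.inl ⟨by linarith, hδ'.le⟩)
    have h2 : v * ccw p A B ≤ 0 :=
      mul_nonpos_iff.2 (Or.inl ⟨hv0, hε'.le⟩)
    have hve : v * ccw p A B = 0 := by linarith
    have hv0' : v = 0 := (mul_eq_zero.1 hve).resolve_right hε
    rw [hv0'] at R3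
    exact hδ (by linarith)
  · have hε' : 0 < ccw p A B := by
      have h1 : 0 < (1-t) * ccw p q A := mul_pos (by linarith) hg
      by_contra hge
      push_neg at hge
      have h2 : t * ccw p A B ≤ 0 := mul_nonpos_iff.2 (Or.inl ⟨ht0'.le, hge⟩)
      linarith
    have hδ' : 0 < ccw p q B := by
      have h1 : 0 < s * ccw p q A := mul_pos hs0' hg
      by_contra hge
      push_neg at hge
      have h2 : t * ccw p q B ≤ 0 := mul_nonpos_iff.2 (Or.inl ⟨ht0'.le, hge⟩)
      linarith
    have h1 : 0 ≤ (1-v) * ccw p q B := mul_nonneg (by linarith) hδ'.le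
    have h2 : 0 ≤ v * ccw p A B := mul_nonneg hv0 hε'.le
    have hve : v * ccw p A B = 0 := by linarith
    have hv0' : v = 0 := (mul_eq_zero.1 hve).resolve_right hε
    rw [hv0'] at R3
    exact hδ (by linarith)


theorem stmt_2 (S : Finset Pt) (h3 : 3 ≤ S.card) (p q : Pt) (hpq : p ≠ q)
    (hp : p ∉ convexHull ℝ (S : Set Pt)) (hq : q ∉ convexHull ℝ (S : Set Pt))
    (hgp : GenPos ((S : Set Pt) ∪ {p, q}))
    (hbig : 3 ≤ (SeenSet p (S : Set Pt) ∪ SeenSet q (S : Set Pt)).ncard)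
    (c : Pt) (hc : c ∈ SeenSet q (S : Set Pt)) :
    ∃ a ∈ SeenSet p (S : Set Pt), ∃ b ∈ SeenSet q (S : Set Pt), b ≠ c ∧
      segment ℝ a p ∩ segment ℝ b q = ∅ := by
  classical
  by_contra hcon
  push_neg at hcon
  have hS : ∀ s : Pt, s ∈ (S : Set Pt) → s ∈ (S : Set Pt) ∪ {p, q} :=
    fun s hs => Set.mem_union_left _ hs
  have hmemp : p ∈ (S : Set Pt) ∪ {p, q} := Set.mem_union_right _ (by simp)
  have hmemq : q ∈ (S : Set Pt) ∪ {p, q} := Set.mem_union_right _ (by simp)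
  have hpneS : ∀ s : Pt, s ∈ (S : Set Pt) → p ≠ s :=
    fun s hs h => hp (by rw [h]; exact subset_convexHull ℝ _ hs)
  have hqneS : ∀ s : Pt, s ∈ (S : Set Pt) → q ≠ s :=
    fun s hs h => hq (by rw [h]; exact subset_convexHull ℝ _ hs)
  have hccw : ∀ x ∈ (S : Set Pt) ∪ {p, q}, ∀ y ∈ (S : Set Pt) ∪ {p, q},
      ∀ z ∈ (S : Set Pt) ∪ {p, q}, x ≠ y → x ≠ z → y ≠ z → ccw x y z ≠ 0 :=
    fun x hx y hy z hz h1 h2 h3 h0 =>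
      hgp x hx y hy z hz h1 h2 h3 (collinear_of_ccw_zero h0)
  have hcross : ∀ a ∈ SeenSet p (S : Set Pt), ∀ b ∈ SeenSet q (S : Set Pt), b ≠ c →
      (segment ℝ p a ∩ segment ℝ q b).Nonempty := by
    intro a ha b hb hbc
    have hne := hcon a ha b hb hbc
    rw [segment_symm ℝ a p, segment_symm ℝ b q] at hne
    exact hne
  -- each of p, q sees at least two points
  have htwo_p := two_seen S (by omega) p hp (fun s hs s' hs' hne =>
    hccw p hmemp s (hS s (by exact_mod_cast hs)) s' (hS s' (by exact_mod_cast hs'))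
      (hpneS s (by exact_mod_cast hs)) (hpneS s' (by exact_mod_cast hs')) hne)
  have htwo_q := two_seen S (by omega) q hq (fun s hs s' hs' hne =>
    hccw q hmemq s (hS s (by exact_mod_cast hs)) s' (hS s' (by exact_mod_cast hs'))
      (hqneS s (by exact_mod_cast hs)) (hqneS s' (by exact_mod_cast hs')) hne)
  obtain ⟨a₀, ha₀, _, _, _⟩ := htwo_p
  obtain ⟨bx, hbx, by', hby, hbxy⟩ := htwo_q
  -- a point of SeenSet q different from c
  obtain ⟨b₀, hb₀q, hb₀c⟩ : ∃ b₀ ∈ SeenSet q (S : Set Pt), b₀ ≠ c := by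
    by_cases h : bx = c
    · exact ⟨by', hby, by rw [← h]; exact Ne.symm hbxy⟩
    · exact ⟨bx, hbx, h⟩
  -- Step 2 : SeenSet p ⊆ SeenSet q
  have hPQ : SeenSet p (S : Set Pt) ⊆ SeenSet q (S : Set Pt) := by
    intro a ha
    by_cases hab : a = b₀
    · rw [hab]; exact hb₀q
    · obtain ⟨y, hy1, hy2⟩ := hcross a ha b₀ hb₀q hb₀c
      have haS : a ∈ (S : Set Pt) := ha.1
      have hb₀S : b₀ ∈ (S : Set Pt) := hb₀q.1
      have hnc : a ∉ segment ℝ q b₀ := by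
        intro hmem
        rcases seg_mem_iff.1 hmem with ⟨t, _, _, c1, c2⟩
        apply hccw q hmemq b₀ (hS _ hb₀S) a (hS _ haS) (hqneS _ hb₀S) (hqneS _ haS)
          (fun h => hab h.symm)
        simp only [ccw]
        rw [c1, c2]; ring
      exact ⟨haS, vis_transfer (subset_convexHull ℝ _ hb₀S) ha.2 hy1 hy2 hnc⟩
  -- Step 4 : SeenSet q \ {c} ⊆ SeenSet p
  have hQP : ∀ b ∈ SeenSet q (S : Set Pt), b ≠ c → b ∈ SeenSet p (S : Set Pt) := by
    intro b hb hbc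
    by_cases hba : b = a₀
    · rw [hba]; exact ha₀
    · obtain ⟨y, hy1, hy2⟩ := hcross a₀ ha₀ b hb hbc
      have hbS : b ∈ (S : Set Pt) := hb.1
      have ha₀S : a₀ ∈ (S : Set Pt) := ha₀.1
      have hnc : b ∉ segment ℝ p a₀ := by
        intro hmem
        rcases seg_mem_iff.1 hmem with ⟨t, _, _, c1, c2⟩
        apply hccw p hmemp a₀ (hS _ ha₀S) b (hS _ hbS) (hpneS _ ha₀S) (hpneS _ hbS)
          (fun h => hba h.symm)
        simp only [ccw]
        rw [c1, c2]; ring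
      exact ⟨hbS, vis_transfer (subset_convexHull ℝ _ ha₀S) hb.2 hy2 hy1 hnc⟩
  -- Step 3 : SeenSet q has at least three elements
  have hfinq : (SeenSet q (S : Set Pt)).Finite :=
    Set.Finite.subset S.finite_toSet (fun x hx => hx.1)
  rw [Set.union_eq_self_of_subset_left hPQ] at hbig
  have hdiff := Set.ncard_diff_singleton_add_one hc hfinq
  obtain ⟨b₁, b₂, hb₁, hb₂, h12⟩ :=
    (Set.one_lt_ncard_iff (s := SeenSet q (S : Set Pt) \ {c}) (hfinq.subset Set.diff_subset)).1 (by omega)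
  have hb₁q : b₁ ∈ SeenSet q (S : Set Pt) := hb₁.1
  have hb₂q : b₂ ∈ SeenSet q (S : Set Pt) := hb₂.1
  have hb₁c : b₁ ≠ c := by have := hb₁.2; simpa using this
  have hb₂c : b₂ ≠ c := by have := hb₂.2; simpa using this
  have hb₁p := hQP b₁ hb₁q hb₁c
  have hb₂p := hQP b₂ hb₂q hb₂c
  have hb₁S : b₁ ∈ (S : Set Pt) := hb₁q.1
  have hb₂S : b₂ ∈ (S : Set Pt) := hb₂q.1
  exact no_double_cross
    (hccw p hmemp q hmemq b₁ (hS _ hb₁S) hpq (hpneS _ hb₁S) (hqneS _ hb₁S))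
    (hccw p hmemp q hmemq b₂ (hS _ hb₂S) hpq (hpneS _ hb₂S) (hqneS _ hb₂S))
    (hccw p hmemp b₁ (hS _ hb₁S) b₂ (hS _ hb₂S) (hpneS _ hb₁S) (hpneS _ hb₂S) h12)
    (hcross b₁ hb₁p b₂ hb₂q hb₂c)
    (hcross b₂ hb₂p b₁ hb₁q hb₁c)
end

section
/- Let S be a finite set of points in the plane in general position with |S| ≥ 2, and let s, t be two distinct points of S. Then there exists a plane (crossing-free) straight-line spanning path of S that starts at s and ends at t. -/
noncomputable section
namespace Aux

def dotp (u v : Pt) : ℝ := u.1 * v.1 + u.2 * v.2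
def perpv (u : Pt) : Pt := (-u.2, u.1)

lemma mem_seg {x y z : Pt} :
    z ∈ segment ℝ x y ↔ ∃ u v : ℝ, 0 ≤ u ∧ 0 ≤ v ∧ u + v = 1 ∧ u • x + v • y = z := Iff.rfl

lemma smul_fst (c : ℝ) (p : Pt) : (c • p).1 = c * p.1 := rfl
lemma smul_snd (c : ℝ) (p : Pt) : (c • p).2 = c * p.2 := rfl
lemma add_fst (p q : Pt) : (p + q).1 = p.1 + q.1 := rfl
lemma add_snd (p q : Pt) : (p + q).2 = p.2 + q.2 := rfl
lemma sub_fst (p q : Pt) : (p - q).1 = p.1 - q.1 := rfl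
lemma sub_snd (p q : Pt) : (p - q).2 = p.2 - q.2 := rfl

lemma ccw_comb {a b p q z : Pt} {u v : ℝ} (huv : u + v = 1) (hz : u • p + v • q = z) :
    ccw a b z = u * ccw a b p + v * ccw a b q := by
  subst hz
  unfold ccw
  simp only [add_fst, add_snd, smul_fst, smul_snd]
  linear_combination (a.2 * (b.1 - a.1) - a.1 * (b.2 - a.2)) * huv

lemma ccw_zero_left (a b : Pt) : ccw a b a = 0 := by unfold ccw; ring
lemma ccw_zero_right (a b : Pt) : ccw a b b = 0 := by unfold ccw; ring
lemma ccw_swap12 (a b c : Pt) : ccw b a c = -ccw a b c := by unfold ccw; ring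
lemma ccw_swap23 (a b c : Pt) : ccw a c b = -ccw a b c := by unfold ccw; ring

lemma ccw_vanish {a b z : Pt} (hz : z ∈ segment ℝ a b) : ccw a b z = 0 := by
  obtain ⟨u, v, hu, hv, huv, h⟩ := mem_seg.mp hz
  rw [ccw_comb huv h, ccw_zero_left, ccw_zero_right]; ring

lemma dotp_comm (u v : Pt) : dotp u v = dotp v u := by unfold dotp; ring
lemma dotp_sub_right (w u v : Pt) : dotp w (u - v) = dotp w u - dotp w v := by
  unfold dotp; simp only [sub_fst, sub_snd]; ring
lemma dotp_add_left (u v w : Pt) : dotp (u + v) w = dotp u w + dotp v w := by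
  unfold dotp; simp only [add_fst, add_snd]; ring
lemma dotp_smul_left (c : ℝ) (u w : Pt) : dotp (c • u) w = c * dotp u w := by
  unfold dotp; simp only [smul_fst, smul_snd]; ring
lemma dotp_self_pos {d : Pt} (hd : d ≠ 0) : 0 < dotp d d := by
  rcases lt_or_eq_of_le (by positivity : (0:ℝ) ≤ d.1^2 + d.2^2) with h | h
  · unfold dotp; nlinarith
  · exfalso; apply hd; have h1 : d.1 = 0 := by nlinarith [sq_nonneg d.1, sq_nonneg d.2]
    have h2 : d.2 = 0 := by nlinarith [sq_nonneg d.1, sq_nonneg d.2]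
    exact Prod.ext h1 h2

/-- key bilinear identity -/
lemma cross_identity (w : Pt) (s y x : Pt) :
    dotp w (y - s) * dotp (perpv w) (x - s) - dotp (perpv w) (y - s) * dotp w (x - s)
      = dotp w w * ccw s y x := by
  unfold dotp perpv ccw; simp only [sub_fst, sub_snd]; ring

lemma dotp_perp_eq_ccw (s r x : Pt) :
    dotp (perpv (r - s)) (x - r) = ccw s r x := by
  unfold dotp perpv ccw; simp only [sub_fst, sub_snd]; ring

lemma dotp_on_seg {d p q z : Pt} (hz : z ∈ segment ℝ p q) {c : ℝ}
    (hp : dotp d p < c) (hq : dotp d q < c) : dotp d z < c := by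
  obtain ⟨u, v, hu, hv, huv, h⟩ := mem_seg.mp hz
  have hdz : dotp d z = u * dotp d p + v * dotp d q := by
    subst h; unfold dotp; simp only [add_fst, add_snd, smul_fst, smul_snd]; ring
  rcases eq_or_lt_of_le hu with h0 | h0
  · have hv1 : v = 1 := by linarith
    rw [hdz, ← h0, hv1]; simpa using hq
  · have e1 := mul_lt_mul_of_pos_left hp h0
    have e2 := mul_le_mul_of_nonneg_left hq.le hv
    have e3 : u * c + v * c = c := by rw [← add_mul, huv, one_mul]
    linarith

lemma dotp_on_seg' {d p q z : Pt} (hz : z ∈ segment ℝ p q) {c : ℝ}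
    (hp : c < dotp d p) (hq : c < dotp d q) : c < dotp d z := by
  obtain ⟨u, v, hu, hv, huv, h⟩ := mem_seg.mp hz
  have hdz : dotp d z = u * dotp d p + v * dotp d q := by
    subst h; unfold dotp; simp only [add_fst, add_snd, smul_fst, smul_snd]; ring
  rcases eq_or_lt_of_le hu with h0 | h0
  · have hv1 : v = 1 := by linarith
    rw [hdz, ← h0, hv1]; simpa using hq
  · have e1 := mul_lt_mul_of_pos_left hp h0
    have e2 := mul_le_mul_of_nonneg_left hq.le hv
    have e3 : u * c + v * c = c := by rw [← add_mul, huv, one_mul]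
    linarith

lemma L1 {a b p q z : Pt} (hz1 : z ∈ segment ℝ a b) (hz2 : z ∈ segment ℝ p q)
    (hp : ccw a b p ≤ 0) (hq : ccw a b q ≤ 0)
    (h0 : ¬(ccw a b p = 0 ∧ ccw a b q = 0)) :
    (z = p ∧ ccw a b p = 0) ∨ (z = q ∧ ccw a b q = 0) := by
  obtain ⟨u, v, hu, hv, huv, hzeq⟩ := mem_seg.mp hz2
  have h1 : ccw a b z = 0 := ccw_vanish hz1
  have h2 : u * ccw a b p + v * ccw a b q = 0 := by rw [← ccw_comb huv hzeq, h1]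
  have e1 : u * ccw a b p ≤ 0 := mul_nonpos_iff.mpr (Or.inl ⟨hu, hp⟩)
  have e2 : v * ccw a b q ≤ 0 := mul_nonpos_iff.mpr (Or.inl ⟨hv, hq⟩)
  have z1 : u * ccw a b p = 0 := by linarith
  have z2 : v * ccw a b q = 0 := by linarith
  by_cases hcp : ccw a b p = 0
  · have hcq : ccw a b q ≠ 0 := fun h => h0 ⟨hcp, h⟩
    have hv0 : v = 0 := by rcases mul_eq_zero.mp z2 with h | h; exact h; exact absurd h hcq
    have hu1 : u = 1 := by linarith
    left; refine ⟨?_, hcp⟩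
    rw [← hzeq, hv0, hu1]; simp
  · have hu0 : u = 0 := by rcases mul_eq_zero.mp z1 with h | h; exact h; exact absurd h hcp
    have hv1 : v = 1 := by linarith
    have hcq : ccw a b q = 0 := by
      rcases mul_eq_zero.mp z2 with h | h
      · exact absurd (h.symm.trans hv1) zero_ne_one
      · exact h
    right; refine ⟨?_, hcq⟩
    rw [← hzeq, hu0, hv1]; simp

lemma L2 {a b p q r : Pt} (hp : ccw a b p ≤ 0) (hq : ccw a b q ≤ 0)
    (hp0 : ccw a b p = 0 → p = r) (hq0 : ccw a b q = 0 → q = r) (hpq : p ≠ q) :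
    segment ℝ a b ∩ segment ℝ p q ⊆ {r} := by
  rintro z ⟨hz1, hz2⟩
  have h0 : ¬(ccw a b p = 0 ∧ ccw a b q = 0) := fun ⟨h1', h2'⟩ =>
    hpq ((hp0 h1').trans (hq0 h2').symm)
  rcases L1 hz1 hz2 hp hq h0 with ⟨rfl, h⟩ | ⟨rfl, h⟩
  · simpa using hp0 h
  · simpa using hq0 h

lemma collinear_of_ccw {a b c : Pt} (h : ccw a b c = 0) :
    Collinear ℝ ({a, b, c} : Set Pt) := by
  rcases eq_or_ne a b with rfl | hab
  · have : ({a, a, c} : Set Pt) = {a, c} := by simp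
    rw [this]; exact collinear_pair ℝ a c
  · rw [collinear_iff_of_mem (show a ∈ ({a,b,c} : Set Pt) by simp)]
    refine ⟨b - a, ?_⟩
    intro p hp
    simp only [Set.mem_insert_iff, Set.mem_singleton_iff] at hp
    rcases hp with rfl | rfl | rfl
    · exact ⟨0, by simp⟩
    · refine ⟨1, ?_⟩
      apply Prod.ext <;> simp [vadd_eq_add, add_fst, add_snd, sub_fst, sub_snd]
    · have hne : b.1 - a.1 ≠ 0 ∨ b.2 - a.2 ≠ 0 := by
        by_contra h'
        push_neg at h'
        exact hab (Prod.ext (by linarith [h'.1]) (by linarith [h'.2]))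
      unfold ccw at h
      rcases hne with h1 | h2
      · refine ⟨(p.1 - a.1)/(b.1 - a.1), ?_⟩
        apply Prod.ext
        · show p.1 = (((p.1 - a.1)/(b.1 - a.1)) • (b - a) +ᵥ a).1
          simp only [vadd_eq_add, add_fst, smul_fst, sub_fst, smul_eq_mul]
          field_simp
          ring
        · show p.2 = (((p.1 - a.1)/(b.1 - a.1)) • (b - a) +ᵥ a).2
          simp only [vadd_eq_add, add_snd, smul_snd, sub_snd, sub_fst, smul_eq_mul]
          field_simp
          linear_combination h
      · refine ⟨(p.2 - a.2)/(b.2 - a.2), ?_⟩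
        apply Prod.ext
        · show p.1 = (((p.2 - a.2)/(b.2 - a.2)) • (b - a) +ᵥ a).1
          simp only [vadd_eq_add, add_fst, smul_fst, sub_fst, sub_snd, smul_eq_mul]
          field_simp
          linear_combination -h
        · show p.2 = (((p.2 - a.2)/(b.2 - a.2)) • (b - a) +ᵥ a).2
          simp only [vadd_eq_add, add_snd, smul_snd, sub_snd, smul_eq_mul]
          field_simp
          ring

lemma gE {l : List Pt} {i : ℕ} (h : i < l.length) : l[i]! = l[i] := getElem!_pos l i h

lemma mem_getElem! {l : List Pt} {i : ℕ} (h : i < l.length) : l[i]! ∈ l := by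
  rw [gE h]; exact List.getElem_mem h

lemma nodup_ne {l : List Pt} (hnd : l.Nodup) {i j : ℕ} (hi : i < l.length)
    (hj : j < l.length) (hij : i ≠ j) : l[i]! ≠ l[j]! := by
  rw [gE hi, gE hj]
  exact fun h => hij ((hnd.getElem_inj_iff).mp h)

lemma head?_getElem! {l : List Pt} {x : Pt} (h : l.head? = some x) : l[0]! = x := by
  cases l with
  | nil => simp at h
  | cons a t => simp_all

lemma getLast?_getElem! {l : List Pt} {x : Pt} (h : l.getLast? = some x) :
    l[l.length - 1]! = x := by
  have hne : l ≠ [] := by rintro rfl; simp at h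
  rw [List.getLast?_eq_getLast hne, Option.some_inj] at h
  rw [gE (by have := List.length_pos_iff.mpr hne; omega)]
  rw [← List.getLast_eq_getElem hne]
  exact h

lemma planeList_short {l : List Pt} (h : l.length ≤ 2) : PlaneList l := by
  intro i j hij hj
  exact absurd hj (by omega)

lemma planeList_append {l₁ l₂ : List Pt} {a b : Pt}
    (h₁ : PlaneList l₁) (h₂ : PlaneList l₂)
    (ha : l₁.getLast? = some a) (hb : l₂.head? = some b)
    (hnd₁ : l₁.Nodup) (hnd₂ : l₂.Nodup)
    (H2 : ∀ i k, i + 1 < l₁.length → k + 1 < l₂.length →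
        segment ℝ l₁[i]! l₁[i+1]! ∩ segment ℝ l₂[k]! l₂[k+1]! = ∅)
    (H3 : ∀ i, i + 1 < l₁.length → segment ℝ a b ∩ segment ℝ l₁[i]! l₁[i+1]! ⊆ {a})
    (H4 : ∀ k, k + 1 < l₂.length → segment ℝ a b ∩ segment ℝ l₂[k]! l₂[k+1]! ⊆ {b}) :
    PlaneList (l₁ ++ l₂) := by
  have hl₁ : l₁ ≠ [] := by rintro rfl; simp at ha
  have hl₂ : l₂ ≠ [] := by rintro rfl; simp at hb
  have hm1 : 1 ≤ l₁.length := List.length_pos_iff.mpr hl₁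
  have hn1 : 1 ≤ l₂.length := List.length_pos_iff.mpr hl₂
  have hlen : (l₁ ++ l₂).length = l₁.length + l₂.length := by simp
  have key : ∀ k, k < l₁.length → (l₁ ++ l₂)[k]! = l₁[k]! := by
    intro k hk
    rw [gE (by rw [hlen]; omega), gE hk]
    exact List.getElem_append_left hk
  have key2 : ∀ k, l₁.length ≤ k → k < l₁.length + l₂.length →
      (l₁ ++ l₂)[k]! = l₂[k - l₁.length]! := by
    intro k hk hk2
    rw [gE (by rw [hlen]; omega), gE (by omega)]
    exact List.getElem_append_right hk
  have hA : l₁[l₁.length - 1]! = a := getLast?_getElem! ha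
  have hB : l₂[0]! = b := head?_getElem! hb
  intro i j hij hj
  rw [hlen] at hj
  rcases lt_trichotomy (j+1) l₁.length with hj1 | hj1 | hj1
  · -- both edges in l₁
    rw [key i (by omega), key (i+1) (by omega), key j (by omega), key (j+1) (by omega)]
    exact h₁ i j hij (by omega)
  · -- edge j is the bridge : j = l₁.length - 1
    rw [key i (by omega), key (i+1) (by omega), key j (by omega),
        key2 (j+1) (by omega) (by omega)]
    have hj' : j = l₁.length - 1 := by omega
    have hj'' : j + 1 - l₁.length = 0 := by omega
    rw [hj'', hB, hj', hA]
    intro z hz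
    have hza : z = a := H3 i (by omega) ⟨hz.2, hz.1⟩
    subst hza
    refine ⟨?_, by simp⟩
    rcases lt_trichotomy (i+1) (l₁.length - 1) with hi1 | hi1 | hi1
    · exfalso
      have hmem := h₁ i (l₁.length - 2) (by omega) (by omega)
      have e : l₁.length - 2 + 1 = l₁.length - 1 := by omega
      have hz2 : z ∈ segment ℝ l₁[l₁.length-2]! l₁[l₁.length-2+1]! := by
        rw [e, hA]; exact right_mem_segment ℝ _ _
      have := (hmem ⟨hz.1, hz2⟩).1
      rcases this with h' | h'
      · exact nodup_ne hnd₁ (by omega) (by omega)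
          (by omega : l₁.length - 1 ≠ i) (hA.trans h')
      · exact nodup_ne hnd₁ (by omega) (by omega)
          (by omega : l₁.length - 1 ≠ i + 1) (hA.trans (Set.eq_of_mem_singleton h'))
    · right; rw [hi1, hA]; exact Set.mem_singleton _
    · omega
  · -- edge j is in l₂ : j ≥ l₁.length
    have hjm : l₁.length ≤ j := by omega
    have ej : j + 1 - l₁.length = (j - l₁.length) + 1 := by omega
    rw [key2 j hjm (by omega), key2 (j+1) (by omega) (by omega), ej]
    rcases lt_trichotomy (i+1) l₁.length with hi1 | hi1 | hi1
    · -- edge i in l₁, edge j in l₂ : disjoint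
      rw [key i (by omega), key (i+1) (by omega)]
      intro z hz
      rw [H2 i (j - l₁.length) (by omega) (by omega)] at hz
      exact absurd hz (Set.notMem_empty z)
    · -- edge i is the bridge
      have hi' : i = l₁.length - 1 := by omega
      have hi'' : i + 1 - l₁.length = 0 := by omega
      rw [key i (by omega), key2 (i+1) (by omega) (by omega), hi'', hB, hi', hA]
      intro z hz
      have hzb : z = b := H4 (j - l₁.length) (by omega) ⟨hz.1, hz.2⟩
      subst hzb
      refine ⟨by simp, ?_⟩
      rcases Nat.eq_zero_or_pos (j - l₁.length) with hk0 | hk0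
      · left; rw [hk0, hB]
      · exfalso
        have hmem := h₂ 0 (j - l₁.length) (by omega) (by omega)
        have hz1 : z ∈ segment ℝ l₂[0]! l₂[0+1]! := by
          rw [hB]; exact left_mem_segment ℝ _ _
        have := (hmem ⟨hz1, hz.2⟩).2
        rcases this with h' | h'
        · exact nodup_ne hnd₂ (by omega) (by omega)
            (by omega : (0:ℕ) ≠ j - l₁.length) (hB.trans h')
        · exact nodup_ne hnd₂ (by omega) (by omega)
            (by omega : (0:ℕ) ≠ j - l₁.length + 1) (hB.trans (Set.eq_of_mem_singleton h'))
    · -- both edges in l₂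
      have him : l₁.length ≤ i := by omega
      have ei : i + 1 - l₁.length = (i - l₁.length) + 1 := by omega
      rw [key2 i him (by omega), key2 (i+1) (by omega) (by omega), ei]
      exact h₂ (i - l₁.length) (j - l₁.length) (by omega) (by omega)

lemma planeList_reverse {l : List Pt} (h : PlaneList l) : PlaneList l.reverse := by
  intro i j hij hj
  rw [List.length_reverse] at hj
  have hrev : ∀ k, k < l.length → l.reverse[k]! = l[l.length - 1 - k]! := by
    intro k hk
    rw [gE (by rw [List.length_reverse]; omega), gE (by omega)]
    exact List.getElem_reverse _
  rw [hrev i (by omega), hrev (i+1) (by omega), hrev j (by omega), hrev (j+1) (by omega)]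
  have r1 : l.length - 1 - i = (l.length - 2 - i) + 1 := by omega
  have r2 : l.length - 1 - (i+1) = l.length - 2 - i := by omega
  have r3 : l.length - 1 - j = (l.length - 2 - j) + 1 := by omega
  have r4 : l.length - 1 - (j+1) = l.length - 2 - j := by omega
  rw [r1, r2, r3, r4]
  have happ := h (l.length - 2 - j) (l.length - 2 - i) (by omega) (by omega)
  intro z hz
  have hz1 : z ∈ segment ℝ l[l.length-2-j]! l[(l.length-2-j)+1]! := by
    rw [segment_symm]; exact hz.2
  have hz2 : z ∈ segment ℝ l[l.length-2-i]! l[(l.length-2-i)+1]! := by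
    rw [segment_symm]; exact hz.1
  have hm := happ ⟨hz1, hz2⟩
  rw [Set.pair_comm l[(l.length-2-i)+1]! l[l.length-2-i]!,
      Set.pair_comm l[(l.length-2-j)+1]! l[l.length-2-j]!]
  exact ⟨hm.2, hm.1⟩

lemma neg_fst (p : Pt) : (-p).1 = -p.1 := rfl
lemma neg_snd (p : Pt) : (-p).2 = -p.2 := rfl
lemma dotp_neg_left (u v : Pt) : dotp (-u) v = - dotp u v := by
  unfold dotp; simp only [neg_fst, neg_snd]; ring

abbrev Ext (S : Finset Pt) (s : Pt) : Prop := ∃ w : Pt, ∀ y ∈ S, y ≠ s → 0 < dotp w (y - s)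

lemma genPos_mono {S T : Set Pt} (h : T ⊆ S) (hgp : GenPos S) : GenPos T :=
  fun a ha b hb c hc hab hac hbc => hgp a (h ha) b (h hb) c (h hc) hab hac hbc

lemma ccw_ne_zero {S : Set Pt} (hgp : GenPos S) {a b c : Pt} (ha : a ∈ S) (hb : b ∈ S)
    (hc : c ∈ S) (hab : a ≠ b) (hac : a ≠ c) (hbc : b ≠ c) : ccw a b c ≠ 0 :=
  fun h => hgp a ha b hb c hc hab hac hbc (collinear_of_ccw h)

lemma tilt (S : Finset Pt) (s b w₀ : Pt) (hbs : b ≠ s)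
    (h0 : dotp w₀ (b - s) = 0)
    (hpos : ∀ y ∈ S, y ≠ s → y ≠ b → 0 < dotp w₀ (y - s)) :
    ∃ w : Pt, ∀ y ∈ S, y ≠ s → 0 < dotp w (y - s) := by
  have hbb : 0 < dotp (b - s) (b - s) := dotp_self_pos (sub_ne_zero.mpr hbs)
  rcases Finset.eq_empty_or_nonempty ((S.erase s).erase b) with hP | hP
  · refine ⟨b - s, fun y hy hys => ?_⟩
    by_cases hyb : y = b
    · subst hyb; exact hbb
    · exfalso
      have : y ∈ (S.erase s).erase b := Finset.mem_erase.mpr ⟨hyb, Finset.mem_erase.mpr ⟨hys, hy⟩⟩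
      rw [hP] at this; exact absurd this (Finset.notMem_empty y)
  · obtain ⟨y₀, hy₀, hmin⟩ := ((S.erase s).erase b).exists_min_image (fun x => dotp w₀ (x - s)) hP
    obtain ⟨y₁, hy₁, hmax⟩ := ((S.erase s).erase b).exists_max_image (fun x => |dotp (b - s) (x - s)|) hP
    set δ := dotp w₀ (y₀ - s) with hδdef
    have hδ : 0 < δ := hpos y₀ (Finset.mem_of_mem_erase (Finset.mem_of_mem_erase hy₀))
      (Finset.ne_of_mem_erase (Finset.mem_of_mem_erase hy₀)) (Finset.ne_of_mem_erase hy₀)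
    set M := |dotp (b - s) (y₁ - s)| with hMdef
    have hM : 0 ≤ M := abs_nonneg _
    set ε := δ / (M + 1) with hεdef
    have hε : 0 < ε := div_pos hδ (by linarith)
    have hεM : ε * (M + 1) = δ := div_mul_cancel₀ δ (by linarith)
    refine ⟨w₀ + ε • (b - s), fun y hy hys => ?_⟩
    rw [dotp_add_left, dotp_smul_left]
    by_cases hyb : y = b
    · subst hyb; rw [h0, zero_add]; exact mul_pos hε hbb
    · have hyP : y ∈ (S.erase s).erase b := Finset.mem_erase.mpr ⟨hyb, Finset.mem_erase.mpr ⟨hys, hy⟩⟩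
      have h1 : δ ≤ dotp w₀ (y - s) := hmin y hyP
      have h2 : |dotp (b - s) (y - s)| ≤ M := hmax y hyP
      have h3 := (abs_le.mp h2).1
      nlinarith

lemma exists_hullnbr (S : Finset Pt) (hgp : GenPos (S : Set Pt)) {s t : Pt} (hs : s ∈ S)
    (ht : t ∈ S) (h3 : 3 ≤ S.card) {w : Pt}
    (hw : ∀ y ∈ S, y ≠ s → 0 < dotp w (y - s)) :
    ∃ r ∈ S, r ≠ s ∧ r ≠ t ∧
      ((∀ x ∈ S, x ≠ s → x ≠ r → 0 < ccw s r x) ∨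
       (∀ x ∈ S, x ≠ s → x ≠ r → ccw s r x < 0)) := by
  set T := S.erase s with hT
  have hTcard : 2 ≤ T.card := by rw [hT, Finset.card_erase_of_mem hs]; omega
  have hTne : T.Nonempty := Finset.card_pos.mp (by omega)
  have hF : ∀ x ∈ T, 0 < dotp w (x - s) := fun x hx =>
    hw x (Finset.mem_of_mem_erase hx) (Finset.ne_of_mem_erase hx)
  have hmemS : ∀ x ∈ T, x ∈ S := fun x hx => Finset.mem_of_mem_erase hx
  have hnes : ∀ x ∈ T, x ≠ s := fun x hx => Finset.ne_of_mem_erase hx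
  have hww : 0 < dotp w w := by
    obtain ⟨x, hx⟩ := hTne
    by_cases hw0 : w = 0
    · exfalso; have := hF x hx; rw [hw0] at this; unfold dotp at this; simp at this
    · exact dotp_self_pos hw0
  set κ : Pt → ℝ := fun x => dotp (perpv w) (x - s) / dotp w (x - s) with hκ
  have key : ∀ x ∈ T, ∀ y ∈ T, (κ x < κ y ↔ ccw s y x < 0) := by
    intro x hx y hy
    rw [hκ]; dsimp only
    rw [div_lt_div_iff₀ (hF x hx) (hF y hy)]
    have hid := cross_identity w s y x
    constructor
    · intro h; nlinarith
    · intro h; nlinarith [mul_neg_of_pos_of_neg hww h]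
  obtain ⟨r₁, hr₁, hmax⟩ := T.exists_max_image κ hTne
  obtain ⟨r₂, hr₂, hmin⟩ := T.exists_min_image κ hTne
  have horient₁ : ∀ x ∈ S, x ≠ s → x ≠ r₁ → ccw s r₁ x < 0 := by
    intro x hxS hxs hxr
    have hxT : x ∈ T := Finset.mem_erase.mpr ⟨hxs, hxS⟩
    have hne : κ x ≠ κ r₁ := by
      intro heq
      have h1 : ¬ (κ x < κ r₁) := by rw [heq]; exact lt_irrefl _
      have h2 : ¬ (κ r₁ < κ x) := by rw [heq]; exact lt_irrefl _
      rw [key x hxT r₁ hr₁] at h1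
      rw [key r₁ hr₁ x hxT] at h2
      have hsw := ccw_swap23 s x r₁
      have hz : ccw s r₁ x = 0 := by push_neg at h1 h2; linarith
      exact ccw_ne_zero hgp (Finset.mem_coe.mpr hs) (Finset.mem_coe.mpr (hmemS r₁ hr₁))
        (Finset.mem_coe.mpr hxS) (Ne.symm (hnes r₁ hr₁)) (Ne.symm hxs) (Ne.symm hxr) hz
    exact (key x hxT r₁ hr₁).mp (lt_of_le_of_ne (hmax x hxT) hne)
  have horient₂ : ∀ x ∈ S, x ≠ s → x ≠ r₂ → 0 < ccw s r₂ x := by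
    intro x hxS hxs hxr
    have hxT : x ∈ T := Finset.mem_erase.mpr ⟨hxs, hxS⟩
    have hne : κ r₂ ≠ κ x := by
      intro heq
      have h1 : ¬ (κ r₂ < κ x) := by rw [heq]; exact lt_irrefl _
      have h2 : ¬ (κ x < κ r₂) := by rw [heq]; exact lt_irrefl _
      rw [key r₂ hr₂ x hxT] at h1
      rw [key x hxT r₂ hr₂] at h2
      have hsw := ccw_swap23 s x r₂
      have hz : ccw s r₂ x = 0 := by push_neg at h1 h2; linarith
      exact ccw_ne_zero hgp (Finset.mem_coe.mpr hs) (Finset.mem_coe.mpr (hmemS r₂ hr₂))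
        (Finset.mem_coe.mpr hxS) (Ne.symm (hnes r₂ hr₂)) (Ne.symm hxs) (Ne.symm hxr) hz
    have hlt : κ r₂ < κ x := lt_of_le_of_ne (hmin x hxT) hne
    have := (key r₂ hr₂ x hxT).mp hlt
    have hsw := ccw_swap23 s x r₂
    linarith
  have hne12 : r₁ ≠ r₂ := by
    obtain ⟨x, hxT, hxr₁⟩ := Finset.exists_mem_ne (show 1 < T.card by omega) r₁
    intro heq
    have hlt := horient₁ x (hmemS x hxT) (hnes x hxT) hxr₁
    have hgt := horient₂ x (hmemS x hxT) (hnes x hxT) (by rw [← heq]; exact hxr₁)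
    rw [← heq] at hgt; linarith
  by_cases hrt : r₁ = t
  · exact ⟨r₂, hmemS r₂ hr₂, hnes r₂ hr₂,
      fun h => hne12 (hrt.trans h.symm), Or.inl horient₂⟩
  · exact ⟨r₁, hmemS r₁ hr₁, hnes r₁ hr₁, hrt, Or.inr horient₁⟩

lemma pathA : ∀ (n : ℕ) (S : Finset Pt), S.card = n → GenPos (S : Set Pt) →
    ∀ s t : Pt, s ∈ S → t ∈ S → s ≠ t → Ext S s →
    ∃ l : List Pt, (l.Nodup ∧ {x | x ∈ l} = (S : Set Pt)) ∧ PlaneList l ∧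
      l.head? = some s ∧ l.getLast? = some t := by
  intro n
  induction n using Nat.strong_induction_on with
  | _ n ih =>
  intro S hn hgp s t hs ht hst hext
  have h2 : 2 ≤ S.card := Finset.one_lt_card.mpr ⟨s, hs, t, ht, hst⟩
  rcases eq_or_lt_of_le h2 with h2' | h3
  · -- card = 2
    have hsub : ({s, t} : Finset Pt) ⊆ S := by
      intro x hx; simp only [Finset.mem_insert, Finset.mem_singleton] at hx
      rcases hx with rfl | rfl; exact hs; exact ht
    have hS : ({s, t} : Finset Pt) = S :=
      Finset.eq_of_subset_of_card_le hsub (by rw [← h2']; simp [hst])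
    refine ⟨[s, t], ⟨by simp [hst], ?_⟩, planeList_short (by simp), rfl, rfl⟩
    rw [← hS]; ext x; simp
  · -- card ≥ 3
    obtain ⟨w, hw⟩ := hext
    obtain ⟨r, hrS, hrs, hrt, horient⟩ := exists_hullnbr S hgp hs ht (by omega) hw
    have hcard' : (S.erase s).card = n - 1 := by rw [Finset.card_erase_of_mem hs, hn]
    have hgp' : GenPos ((S.erase s : Finset Pt) : Set Pt) :=
      genPos_mono (by rw [Finset.coe_erase]; exact Set.diff_subset) hgp
    have hrS' : r ∈ S.erase s := Finset.mem_erase.mpr ⟨hrs, hrS⟩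
    have htS' : t ∈ S.erase s := Finset.mem_erase.mpr ⟨Ne.symm hst, ht⟩
    have hext' : Ext (S.erase s) r := by
      rcases horient with hpos | hneg
      · refine ⟨perpv (r - s), fun y hy hyr => ?_⟩
        rw [dotp_perp_eq_ccw]
        exact hpos y (Finset.mem_of_mem_erase hy) (Finset.ne_of_mem_erase hy) hyr
      · refine ⟨-perpv (r - s), fun y hy hyr => ?_⟩
        rw [dotp_neg_left, dotp_perp_eq_ccw]
        have := hneg y (Finset.mem_of_mem_erase hy) (Finset.ne_of_mem_erase hy) hyr
        linarith
    obtain ⟨l₂, ⟨hnd₂, hcov₂⟩, hpl₂, hhead₂, hlast₂⟩ :=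
      ih (n-1) (by omega) (S.erase s) hcard' hgp' r t hrS' htS' hrt hext'
    have hmem₂ : ∀ x, x ∈ l₂ → x ∈ S.erase s := by
      intro x hx
      have : x ∈ {y | y ∈ l₂} := hx
      rw [hcov₂] at this; exact Finset.mem_coe.mp this
    have hsnot : s ∉ l₂ := fun h => (Finset.notMem_erase s S) (hmem₂ s h)
    have hl₂ne : l₂ ≠ [] := by rintro rfl; simp at hhead₂
    refine ⟨s :: l₂, ⟨List.nodup_cons.mpr ⟨hsnot, hnd₂⟩, ?_⟩, ?_, rfl, ?_⟩
    · ext x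
      simp only [List.mem_cons, Set.mem_setOf_eq, Finset.mem_coe]
      constructor
      · rintro (rfl | hx)
        · exact hs
        · exact Finset.mem_of_mem_erase (hmem₂ x hx)
      · intro hx
        by_cases hxs : x = s
        · exact Or.inl hxs
        · refine Or.inr ?_
          have : x ∈ ((S.erase s : Finset Pt) : Set Pt) := Finset.mem_coe.mpr (Finset.mem_erase.mpr ⟨hxs, hx⟩)
          rw [← hcov₂] at this; exact this
    · -- PlaneList
      have hsr : s ≠ r := Ne.symm hrs
      show PlaneList ([s] ++ l₂)
      apply planeList_append (a := s) (b := r) (planeList_short (by simp)) hpl₂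
        (by simp) hhead₂ (by simp) hnd₂
      · intro i k hi hk; exact absurd hi (by simp)
      · intro i hi; exact absurd hi (by simp)
      · intro k hk
        have hp : l₂[k]! ∈ S.erase s := hmem₂ _ (mem_getElem! (by omega))
        have hq : l₂[k+1]! ∈ S.erase s := hmem₂ _ (mem_getElem! hk)
        have hpq : l₂[k]! ≠ l₂[k+1]! := nodup_ne hnd₂ (by omega) hk (by omega)
        have fact : ∀ x ∈ S.erase s, (∀ y ∈ S, y ≠ s → y ≠ r → ccw s r y < 0) →
            ccw s r x ≤ 0 ∧ (ccw s r x = 0 → x = r) := by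
          intro x hx hneg
          by_cases hxr : x = r
          · subst hxr; exact ⟨le_of_eq (ccw_zero_right s x), fun _ => rfl⟩
          · have := hneg x (Finset.mem_of_mem_erase hx) (Finset.ne_of_mem_erase hx) hxr
            exact ⟨this.le, fun h0 => absurd h0 (ne_of_lt this)⟩
        rcases horient with hpos | hneg
        · -- flip orientation: use (r, s)
          have hneg' : ∀ y ∈ S, y ≠ s → y ≠ r → ccw r s y < 0 := by
            intro y hy hys hyr
            have := hpos y hy hys hyr
            have hsw := ccw_swap12 s r y
            linarith
          have fact' : ∀ x ∈ S.erase s, ccw r s x ≤ 0 ∧ (ccw r s x = 0 → x = r) := by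
            intro x hx
            by_cases hxr : x = r
            · subst hxr; exact ⟨le_of_eq (ccw_zero_left x s), fun _ => rfl⟩
            · have := hneg' x (Finset.mem_of_mem_erase hx) (Finset.ne_of_mem_erase hx) hxr
              exact ⟨this.le, fun h0 => absurd h0 (ne_of_lt this)⟩
          rw [segment_symm]
          exact L2 (fact' _ hp).1 (fact' _ hq).1 (fact' _ hp).2 (fact' _ hq).2 hpq
        · exact L2 (fact _ hp hneg).1 (fact _ hq hneg).1 (fact _ hp hneg).2 (fact _ hq hneg).2 hpq
    · -- getLast?
      cases l₂ with
      | nil => exact absurd rfl hl₂ne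
      | cons c cs => rw [List.getLast?_cons_cons]; exact hlast₂

lemma dotp_tangent₁ (a b y : Pt) : dotp (b.2 - a.2, a.1 - b.1) (y - a) = -ccw a b y := by
  unfold dotp ccw; simp only [sub_fst, sub_snd]; ring

lemma dotp_tangent₂ (a b y : Pt) : dotp (b.2 - a.2, a.1 - b.1) (y - b) = -ccw a b y := by
  unfold dotp ccw; simp only [sub_fst, sub_snd]; ring

end Aux

end

open Aux

theorem stmt_3 (S : Finset Pt) (h2 : 2 ≤ S.card) (hgp : GenPos (S : Set Pt))
    (s t : Pt) (hs : s ∈ S) (ht : t ∈ S) (hst : s ≠ t) :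
    ∃ l : List Pt, PlaneSpanningPath (S : Set Pt) l ∧
      l.head? = some s ∧ l.getLast? = some t := by
  classical
  by_cases hE1 : Ext S s
  · obtain ⟨l, hsp, hpl, h1, h2'⟩ := pathA S.card S rfl hgp s t hs ht hst hE1
    exact ⟨l, ⟨hsp, hpl⟩, h1, h2'⟩
  by_cases hE2 : Ext S t
  · obtain ⟨l, ⟨hnd, hcov⟩, hpl, h1, h2'⟩ := pathA S.card S rfl hgp t s ht hs (Ne.symm hst) hE2
    refine ⟨l.reverse, ⟨⟨List.nodup_reverse.mpr hnd, ?_⟩, planeList_reverse hpl⟩, ?_, ?_⟩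
    · rw [← hcov]; ext x; simp
    · rw [List.head?_reverse]; exact h2'
    · rw [List.getLast?_reverse]; exact h1
  · set d := t - s with hd
    have hdne : d ≠ 0 := sub_ne_zero.mpr (Ne.symm hst)
    have hdd : 0 < dotp d d := dotp_self_pos hdne
    have hfst : dotp d s < dotp d t := by
      have h' : dotp d (t - s) = dotp d t - dotp d s := dotp_sub_right d t s
      rw [← hd] at h'; linarith
    obtain ⟨c, ⟨⟨hcs, hct⟩, hcim⟩⟩ :=
      ((Set.Ioo_infinite hfst).diff (S.image (dotp d)).finite_toSet).nonempty
    have hcval : ∀ x ∈ S, dotp d x ≠ c := by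
      intro x hx heq
      exact hcim (Finset.mem_coe.mpr (Finset.mem_image.mpr ⟨x, hx, heq⟩))
    set S₁ := S.filter (fun x => dotp d x < c) with hS₁
    set S₂ := S.filter (fun x => c < dotp d x) with hS₂
    have hsS₁ : s ∈ S₁ := Finset.mem_filter.mpr ⟨hs, hcs⟩
    have htS₂ : t ∈ S₂ := Finset.mem_filter.mpr ⟨ht, hct⟩
    have hS₁S : ∀ x ∈ S₁, x ∈ S := fun x hx => (Finset.mem_filter.mp hx).1
    have hS₂S : ∀ x ∈ S₂, x ∈ S := fun x hx => (Finset.mem_filter.mp hx).1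
    have hd₁ : ∀ x ∈ S₁, dotp d x < c := fun x hx => (Finset.mem_filter.mp hx).2
    have hd₂ : ∀ x ∈ S₂, c < dotp d x := fun x hx => (Finset.mem_filter.mp hx).2
    have hsplit : ∀ x ∈ S, x ∈ S₁ ∨ x ∈ S₂ := by
      intro x hx
      rcases lt_trichotomy (dotp d x) c with h | h | h
      · exact Or.inl (Finset.mem_filter.mpr ⟨hx, h⟩)
      · exact absurd h (hcval x hx)
      · exact Or.inr (Finset.mem_filter.mpr ⟨hx, h⟩)
    have hdisj : ∀ x ∈ S₁, ∀ y ∈ S₂, x ≠ y := by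
      intro x hx y hy h; subst h; linarith [hd₁ x hx, hd₂ x hy]
    -- tangent pair
    set η : Pt × Pt → ℝ := fun pq =>
      (dotp (perpv d) pq.1 * (dotp d pq.2 - c) + dotp (perpv d) pq.2 * (c - dotp d pq.1))
        / (dotp d pq.2 - dotp d pq.1) with hη
    obtain ⟨ab, habmem, hmax⟩ := (S₁ ×ˢ S₂).exists_max_image η
      ⟨(s, t), Finset.mem_product.mpr ⟨hsS₁, htS₂⟩⟩
    obtain ⟨a, b⟩ := ab
    obtain ⟨haS₁, hbS₂⟩ := Finset.mem_product.mp habmem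
    have hab : a ≠ b := hdisj a haS₁ b hbS₂
    have haS : a ∈ S := hS₁S a haS₁
    have hbS : b ∈ S := hS₂S b hbS₂
    have hDab : 0 < dotp d b - dotp d a := by linarith [hd₁ a haS₁, hd₂ b hbS₂]
    have claim : ∀ x ∈ S, x ≠ a → x ≠ b → ccw a b x < 0 := by
      intro x hxS hxa hxb
      have hccw_ne : ccw a b x ≠ 0 :=
        ccw_ne_zero hgp (Finset.mem_coe.mpr haS) (Finset.mem_coe.mpr hbS)
          (Finset.mem_coe.mpr hxS) hab (Ne.symm hxa) (Ne.symm hxb)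
      have hW : dotp d (b - a) * dotp (perpv d) (x - a)
          - dotp (perpv d) (b - a) * dotp d (x - a) = dotp d d * ccw a b x :=
        cross_identity d a b x
      rw [dotp_sub_right, dotp_sub_right, dotp_sub_right, dotp_sub_right] at hW
      rcases hsplit x hxS with hx₁ | hx₂
      · -- x ∈ S₁ : compare pair (x, b) with (a, b)
        have hcomp := hmax (x, b) (Finset.mem_product.mpr ⟨hx₁, hbS₂⟩)
        rw [hη] at hcomp; dsimp only at hcomp
        have hDxb : 0 < dotp d b - dotp d x := by linarith [hd₁ x hx₁, hd₂ b hbS₂]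
        rw [div_le_div_iff₀ hDxb hDab] at hcomp
        have hid : (dotp (perpv d) x * (dotp d b - c) + dotp (perpv d) b * (c - dotp d x)) * (dotp d b - dotp d a)
            - (dotp (perpv d) a * (dotp d b - c) + dotp (perpv d) b * (c - dotp d a)) * (dotp d b - dotp d x)
            = ((dotp d b - dotp d a) * (dotp (perpv d) x - dotp (perpv d) a)
              - (dotp (perpv d) b - dotp (perpv d) a) * (dotp d x - dotp d a)) * (dotp d b - c) := by
          ring
        have hbc : 0 < dotp d b - c := by linarith [hd₂ b hbS₂]
        have hkey : (dotp d b - dotp d a) * (dotp (perpv d) x - dotp (perpv d) a)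
            - (dotp (perpv d) b - dotp (perpv d) a) * (dotp d x - dotp d a) ≤ 0 := by
          by_contra hW'
          push_neg at hW'
          nlinarith [mul_pos hW' hbc]
        have hmul : dotp d d * ccw a b x ≤ 0 := by linarith [hW, hkey]
        have hle : ccw a b x ≤ 0 := by nlinarith [hmul, hdd]
        rcases lt_or_eq_of_le hle with h | h
        · exact h
        · exact absurd h hccw_ne
      · -- x ∈ S₂ : compare pair (a, x) with (a, b)
        have hcomp := hmax (a, x) (Finset.mem_product.mpr ⟨haS₁, hx₂⟩)
        rw [hη] at hcomp; dsimp only at hcomp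
        have hDax : 0 < dotp d x - dotp d a := by linarith [hd₁ a haS₁, hd₂ x hx₂]
        rw [div_le_div_iff₀ hDax hDab] at hcomp
        have hid : (dotp (perpv d) a * (dotp d x - c) + dotp (perpv d) x * (c - dotp d a)) * (dotp d b - dotp d a)
            - (dotp (perpv d) a * (dotp d b - c) + dotp (perpv d) b * (c - dotp d a)) * (dotp d x - dotp d a)
            = ((dotp d b - dotp d a) * (dotp (perpv d) x - dotp (perpv d) a)
              - (dotp (perpv d) b - dotp (perpv d) a) * (dotp d x - dotp d a)) * (c - dotp d a) := by
          ring
        have hbc : 0 < c - dotp d a := by linarith [hd₁ a haS₁]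
        have hkey : (dotp d b - dotp d a) * (dotp (perpv d) x - dotp (perpv d) a)
            - (dotp (perpv d) b - dotp (perpv d) a) * (dotp d x - dotp d a) ≤ 0 := by
          by_contra hW'
          push_neg at hW'
          nlinarith [mul_pos hW' hbc]
        have hmul : dotp d d * ccw a b x ≤ 0 := by linarith [hW, hkey]
        have hle : ccw a b x ≤ 0 := by nlinarith [hmul, hdd]
        rcases lt_or_eq_of_le hle with h | h
        · exact h
        · exact absurd h hccw_ne
    -- a ≠ s and b ≠ t (else s or t would be extreme in S)
    have has : a ≠ s := by
      intro heq
      subst heq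
      refine hE1 (tilt S a b (b.2 - a.2, a.1 - b.1) (Ne.symm (hdisj a haS₁ b hbS₂)) ?_ ?_)
      · rw [dotp_tangent₁, ccw_zero_right]; ring
      · intro y hy hya hyb
        rw [dotp_tangent₁]
        have := claim y hy hya hyb
        linarith
    have hbt : b ≠ t := by
      intro heq
      subst heq
      refine hE2 (tilt S b a (b.2 - a.2, a.1 - b.1) (hdisj a haS₁ b hbS₂) ?_ ?_)
      · rw [dotp_tangent₂, ccw_zero_left]; ring
      · intro y hy hyb hya
        rw [dotp_tangent₂]
        have := claim y hy hya hyb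
        linarith
    have hextA : Ext S₁ a := ⟨(b.2 - a.2, a.1 - b.1), fun y hy hya => by
      rw [dotp_tangent₁]
      have := claim y (hS₁S y hy) hya (hdisj y hy b hbS₂)
      linarith⟩
    have hextB : Ext S₂ b := ⟨(b.2 - a.2, a.1 - b.1), fun y hy hyb => by
      rw [dotp_tangent₂]
      have := claim y (hS₂S y hy) (Ne.symm (hdisj a haS₁ y hy)) hyb
      linarith⟩
    obtain ⟨l₁', ⟨hnd₁, hcov₁⟩, hpl₁, hh₁, hl₁⟩ := pathA S₁.card S₁ rfl
      (genPos_mono (Finset.coe_subset.mpr (Finset.filter_subset _ S)) hgp) a s haS₁ hsS₁ has hextA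
    obtain ⟨l₂, ⟨hnd₂, hcov₂⟩, hpl₂, hh₂, hl₂⟩ := pathA S₂.card S₂ rfl
      (genPos_mono (Finset.coe_subset.mpr (Finset.filter_subset _ S)) hgp) b t hbS₂ htS₂ hbt hextB
    have hmem₁ : ∀ x, x ∈ l₁'.reverse → x ∈ S₁ := by
      intro x hx; rw [List.mem_reverse] at hx
      have : x ∈ {y | y ∈ l₁'} := hx
      rw [hcov₁] at this; exact Finset.mem_coe.mp this
    have hmem₂ : ∀ x, x ∈ l₂ → x ∈ S₂ := by
      intro x hx
      have : x ∈ {y | y ∈ l₂} := hx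
      rw [hcov₂] at this; exact Finset.mem_coe.mp this
    have hnd₁' : l₁'.reverse.Nodup := List.nodup_reverse.mpr hnd₁
    have hL1last : l₁'.reverse.getLast? = some a := by rw [List.getLast?_reverse]; exact hh₁
    have hL1head : l₁'.reverse.head? = some s := by rw [List.head?_reverse]; exact hl₁
    refine ⟨l₁'.reverse ++ l₂, ⟨⟨?_, ?_⟩, ?_⟩, ?_, ?_⟩
    · rw [List.nodup_append]
      exact ⟨hnd₁', hnd₂, fun x hx y hy => hdisj x (hmem₁ x hx) y (hmem₂ y hy)⟩
    · ext x
      simp only [Set.mem_setOf_eq, List.mem_append, Finset.mem_coe]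
      constructor
      · rintro (hx | hx)
        · exact hS₁S x (hmem₁ x hx)
        · exact hS₂S x (hmem₂ x hx)
      · intro hx
        rcases hsplit x hx with h | h
        · left
          have hx' : x ∈ ((S₁ : Finset Pt) : Set Pt) := Finset.mem_coe.mpr h
          rw [← hcov₁] at hx'
          rw [List.mem_reverse]; exact hx'
        · right
          have hx' : x ∈ ((S₂ : Finset Pt) : Set Pt) := Finset.mem_coe.mpr h
          rw [← hcov₂] at hx'; exact hx'
    · apply planeList_append (a := a) (b := b) (planeList_reverse hpl₁) hpl₂ hL1last hh₂ hnd₁' hnd₂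
      · intro i k hi hk
        rw [Set.eq_empty_iff_forall_notMem]
        rintro z ⟨hz1, hz2⟩
        have p1 : l₁'.reverse[i]! ∈ S₁ := hmem₁ _ (mem_getElem! (by omega))
        have p2 : l₁'.reverse[i+1]! ∈ S₁ := hmem₁ _ (mem_getElem! hi)
        have q1 : l₂[k]! ∈ S₂ := hmem₂ _ (mem_getElem! (by omega))
        have q2 : l₂[k+1]! ∈ S₂ := hmem₂ _ (mem_getElem! hk)
        have hlt := dotp_on_seg (d := d) hz1 (hd₁ _ p1) (hd₁ _ p2)
        have hgt := dotp_on_seg' (d := d) hz2 (hd₂ _ q1) (hd₂ _ q2)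
        linarith
      · intro i hi
        have p1 : l₁'.reverse[i]! ∈ S₁ := hmem₁ _ (mem_getElem! (by omega))
        have p2 : l₁'.reverse[i+1]! ∈ S₁ := hmem₁ _ (mem_getElem! hi)
        have fact : ∀ x ∈ S₁, ccw a b x ≤ 0 ∧ (ccw a b x = 0 → x = a) := by
          intro x hx
          by_cases hxa : x = a
          · subst hxa; exact ⟨le_of_eq (ccw_zero_left x b), fun _ => rfl⟩
          · have := claim x (hS₁S x hx) hxa (hdisj x hx b hbS₂)
            exact ⟨this.le, fun h0 => absurd h0 (ne_of_lt this)⟩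
        exact L2 (fact _ p1).1 (fact _ p2).1 (fact _ p1).2 (fact _ p2).2
          (nodup_ne hnd₁' (by omega) hi (by omega))
      · intro k hk
        have q1 : l₂[k]! ∈ S₂ := hmem₂ _ (mem_getElem! (by omega))
        have q2 : l₂[k+1]! ∈ S₂ := hmem₂ _ (mem_getElem! hk)
        have fact : ∀ x ∈ S₂, ccw a b x ≤ 0 ∧ (ccw a b x = 0 → x = b) := by
          intro x hx
          by_cases hxb : x = b
          · subst hxb; exact ⟨le_of_eq (ccw_zero_right a x), fun _ => rfl⟩
          · have := claim x (hS₂S x hx) (Ne.symm (hdisj a haS₁ x hx)) hxb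
            exact ⟨this.le, fun h0 => absurd h0 (ne_of_lt this)⟩
        exact L2 (fact _ q1).1 (fact _ q2).1 (fact _ q1).2 (fact _ q2).2
          (nodup_ne hnd₂ (by omega) hk (by omega))
    · rw [List.head?_append, hL1head]
      rfl
    · rw [List.getLast?_append, hl₂]
      rfl
end

section
/- Let S be a finite set of points in general position with both s and t lying on the boundary of the convex hull of S, s ≠ t. Then there exists a plane straight-line spanning path of S starting at s and ending at t, obtained by rotating a line around the intersection point of supporting lines at s and t. -/
/-! ### Auxiliary machinery for `stmt_4` -/

namespace Stmt4Aux

/-- The linear functional on the plane with coefficient pair `w`. -/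
def lin (w x : Pt) : ℝ := w.1 * x.1 + w.2 * x.2

lemma lin_smul_add (w p q : Pt) (a b : ℝ) :
    lin w (a • p + b • q) = a * lin w p + b * lin w q := by
  simp only [lin, Prod.fst_add, Prod.snd_add, Prod.smul_fst, Prod.smul_snd, smul_eq_mul]
  ring

lemma lin_of_seg {w p q x : Pt} {c : ℝ} (hp : lin w p = c) (hq : lin w q = c)
    (hx : x ∈ segment ℝ p q) : lin w x = c := by
  obtain ⟨a, b, _, _, hab, rfl⟩ := hx
  rw [lin_smul_add, hp, hq]
  linear_combination c * hab

lemma convex_lin_lt (w : Pt) (c : ℝ) : Convex ℝ {x : Pt | lin w x < c} := by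
  intro x hx y hy a b ha hb hab
  simp only [Set.mem_setOf_eq] at *
  rw [lin_smul_add]
  rcases ha.eq_or_lt with h | h
  · rw [← h]
    have hb1 : b = 1 := by linarith
    simpa [hb1] using hy
  · have h1 : a * lin w x < a * c := (mul_lt_mul_iff_right₀ h).2 hx
    have h2 : b * lin w y ≤ b * c := mul_le_mul_of_nonneg_left hy.le hb
    have habc : a * c + b * c = c := by linear_combination c * hab
    linarith

lemma collinear_of_lin {w : Pt} (hw : w ≠ 0) {c : ℝ} {P : Set Pt}
    (h : ∀ p ∈ P, lin w p = c) : Collinear ℝ P := by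
  rw [collinear_iff_exists_forall_eq_smul_vadd]
  by_cases h1 : w.1 = 0
  · have h2 : w.2 ≠ 0 := fun h2 => hw (Prod.ext h1 h2)
    refine ⟨((0 : ℝ), c / w.2), ((1 : ℝ), (0 : ℝ)), fun p hp => ⟨p.1, ?_⟩⟩
    have hp' := h p hp
    simp only [lin, h1, zero_mul, zero_add] at hp'
    have hp2 : p.2 = c / w.2 := by field_simp; linarith
    have : (p.1 • ((1 : ℝ), (0 : ℝ)) +ᵥ ((0 : ℝ), c / w.2) : Pt)
        = (p.1, c / w.2) := by
      simp [Prod.ext_iff]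
    rw [this]
    exact Prod.ext rfl hp2
  · refine ⟨(c / w.1, (0 : ℝ)), (-w.2, w.1), fun p hp => ⟨p.2 / w.1, ?_⟩⟩
    have hp' := h p hp
    simp only [lin] at hp'
    have : ((p.2 / w.1) • (-w.2, w.1) +ᵥ (c / w.1, (0 : ℝ)) : Pt)
        = (p.2 / w.1 * (-w.2) + c / w.1, p.2 / w.1 * w.1) := by
      simp [Prod.ext_iff]
    rw [this]
    refine Prod.ext ?_ ?_
    · show p.1 = p.2 / w.1 * (-w.2) + c / w.1
      field_simp
      linear_combination hp'
    · show p.2 = p.2 / w.1 * w.1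
      field_simp

lemma seg_inter_aux {w : Pt} {c : ℝ} {s u p q : Pt}
    (hsc : lin w s = c) (huc : lin w u = c)
    (hp : lin w p < c ∨ p = u) (hq : lin w q < c ∨ q = u) (hpq : p ≠ q) :
    segment ℝ s u ∩ segment ℝ p q ⊆ (({s, u} : Set Pt) ∩ ({p, q} : Set Pt)) := by
  rintro x ⟨hx1, hx2⟩
  have hxc : lin w x = c := lin_of_seg hsc huc hx1
  obtain ⟨a, b, ha, hb, hab, hx⟩ := hx2
  have hlin : a * lin w p + b * lin w q = c := by rw [← lin_smul_add, hx, hxc]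
  rcases hp with hp | hpu
  · rcases hq with hq | hqu
    · exfalso
      rcases ha.eq_or_lt with h | h
      · have hb1 : b = 1 := by linarith
        rw [← h, hb1] at hlin
        simp at hlin
        linarith
      · have h1 : a * lin w p < a * c := (mul_lt_mul_iff_right₀ h).2 hp
        have h2 : b * lin w q ≤ b * c := mul_le_mul_of_nonneg_left hq.le hb
        have habc : a * c + b * c = c := by linear_combination c * hab
        linarith
    · -- q = u
      rw [hqu, huc] at hlin
      have ha0 : a = 0 := by
        by_contra h
        have hapos : 0 < a := lt_of_le_of_ne ha (Ne.symm h)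
        have h1 : a * lin w p < a * c := (mul_lt_mul_iff_right₀ hapos).2 hp
        have habc : a * c + b * c = c := by linear_combination c * hab
        linarith
      have hxq : x = q := by
        rw [← hx, ha0]
        have hb1 : b = 1 := by linarith
        simp [hb1]
      constructor
      · right; rw [hxq, hqu]; exact Set.mem_singleton _
      · right; exact hxq
  · rcases hq with hq | hqu
    · -- p = u
      rw [hpu, huc] at hlin
      have hb0 : b = 0 := by
        by_contra h
        have hbpos : 0 < b := lt_of_le_of_ne hb (Ne.symm h)
        have h1 : b * lin w q < b * c := (mul_lt_mul_iff_right₀ hbpos).2 hq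
        have habc : a * c + b * c = c := by linear_combination c * hab
        linarith
      have hxp : x = p := by
        rw [← hx, hb0]
        have ha1 : a = 1 := by linarith
        simp [ha1]
      constructor
      · right; rw [hxp, hpu]; exact Set.mem_singleton _
      · left; exact hxp
    · rw [hpu, ← hqu] at hpq
      exact absurd rfl hpq

lemma support_aux (S : Finset Pt) (hgp : GenPos (S : Set Pt)) {s : Pt} (hs : s ∈ S)
    (γ η : Pt)
    (hlt : ∀ x ∈ S.erase s, lin γ x < lin γ s)
    (hind : ∀ m : ℝ, ¬(m * γ.1 - η.1 = 0 ∧ m * γ.2 - η.2 = 0))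
    (hne : (S.erase s).Nonempty) :
    ∃ v ∈ S.erase s, ∃ (w : Pt) (c : ℝ), w ≠ 0 ∧ lin w s = c ∧ lin w v = c ∧
      (∀ x ∈ S, x ≠ s → x ≠ v → lin w x < c) ∧
      (∀ x ∈ S.erase s,
        (lin η s - lin η x) / (lin γ s - lin γ x)
          ≤ (lin η s - lin η v) / (lin γ s - lin γ v)) ∧
      (∀ x ∈ S.erase s,
        (lin η s - lin η x) / (lin γ s - lin γ x)
          = (lin η s - lin η v) / (lin γ s - lin γ v) → lin w x = c) := by
  classical
  obtain ⟨v, hvT, hmax⟩ := Finset.exists_max_image (S.erase s)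
      (fun x => (lin η s - lin η x) / (lin γ s - lin γ x)) hne
  set δ : Pt → ℝ := fun x => (lin η s - lin η x) / (lin γ s - lin γ x) with hδdef
  set m := δ v with hm
  set w : Pt := (m * γ.1 - η.1, m * γ.2 - η.2) with hw
  set c := lin w s with hc
  have hvS : v ∈ S := Finset.mem_of_mem_erase hvT
  have hvs : v ≠ s := Finset.ne_of_mem_erase hvT
  have hd : ∀ x ∈ S.erase s, 0 < lin γ s - lin γ x := fun x hx => sub_pos.2 (hlt x hx)
  have hkey : ∀ x ∈ S.erase s, c - lin w x = (m - δ x) * (lin γ s - lin γ x) := by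
    intro x hx
    have hdx := (hd x hx).ne'
    have h1 : lin η s - lin η x = δ x * (lin γ s - lin γ x) := (div_mul_cancel₀ _ hdx).symm
    have h2 : c - lin w x = m * (lin γ s - lin γ x) - (lin η s - lin η x) := by
      simp only [hc, hw, lin]
      ring
    rw [h2, h1]
    ring
  have hw0 : w ≠ 0 := by
    intro h
    exact hind m ⟨congrArg Prod.fst h, congrArg Prod.snd h⟩
  have heqv : lin w v = c := by
    have h1 : c - lin w v = 0 := by
      rw [hkey v hvT, ← hm]
      ring
    linarith
  have heqc : ∀ x ∈ S.erase s, δ x = m → lin w x = c := by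
    intro x hx he
    have h1 := hkey x hx
    rw [he] at h1
    simp at h1
    linarith
  have hstrict : ∀ x ∈ S, x ≠ s → x ≠ v → lin w x < c := by
    intro x hxS hxs hxv
    have hxT : x ∈ S.erase s := Finset.mem_erase.2 ⟨hxs, hxS⟩
    have hle : lin w x ≤ c := by
      have h1 := hkey x hxT
      nlinarith [mul_nonneg (sub_nonneg.2 (hmax x hxT)) (hd x hxT).le]
    rcases hle.lt_or_eq with h | h
    · exact h
    · exfalso
      have hcol : Collinear ℝ ({x, s, v} : Set Pt) := by
        apply collinear_of_lin hw0 (c := c)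
        rintro p (rfl | rfl | rfl)
        exacts [h, rfl, heqv]
      exact hgp x (Finset.mem_coe.2 hxS) s (Finset.mem_coe.2 hs) v (Finset.mem_coe.2 hvS)
        hxs hxv (Ne.symm hvs) hcol
  exact ⟨v, hvT, w, c, hw0, rfl, heqv, hstrict, fun x hx => hmax x hx, heqc⟩

lemma exists_hull_edge (S : Finset Pt) (h3 : 3 ≤ S.card) (hgp : GenPos (S : Set Pt))
    {s t : Pt} (hs : s ∈ S) (ht : t ∈ S) (hst : s ≠ t)
    (hext : s ∉ convexHull ℝ ((S : Set Pt) \ {s})) :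
    ∃ u ∈ S, u ≠ s ∧ u ≠ t ∧ ∃ (w : Pt) (c : ℝ),
      lin w s = c ∧ lin w u = c ∧ ∀ x ∈ S, x ≠ s → x ≠ u → lin w x < c := by
  classical
  have hTc : ((S.erase s : Finset Pt) : Set Pt) = (S : Set Pt) \ {s} := Finset.coe_erase s S
  have hsT : s ∉ convexHull ℝ ((S.erase s : Finset Pt) : Set Pt) := by rw [hTc]; exact hext
  have hclosed : IsClosed (convexHull ℝ ((S.erase s : Finset Pt) : Set Pt)) :=
    ((S.erase s).finite_toSet.isCompact_convexHull ℝ).isClosed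
  obtain ⟨f, u₀, hfs, hfT⟩ :=
    geometric_hahn_banach_point_closed (convex_convexHull ℝ _) hclosed hsT
  obtain ⟨γ, hγ⟩ : ∃ γ : Pt, γ = (-(f (1, 0)), -(f (0, 1))) := ⟨_, rfl⟩
  have hflin : ∀ x : Pt, lin γ x = -(f x) := by
    intro x
    have hx : x = x.1 • ((1 : ℝ), (0 : ℝ)) + x.2 • ((0 : ℝ), (1 : ℝ)) := by
      refine Prod.ext ?_ ?_ <;> simp
    have : f x = x.1 * f (1, 0) + x.2 * f (0, 1) := by
      conv_lhs => rw [hx]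
      rw [map_add, map_smul, map_smul]
      simp [smul_eq_mul]
    rw [this, hγ]
    simp [lin]
    ring
  have hne : (S.erase s).Nonempty := by
    apply Finset.card_pos.1
    rw [Finset.card_erase_of_mem hs]
    omega
  have hlt : ∀ x ∈ S.erase s, lin γ x < lin γ s := by
    intro x hx
    have hxh : (x : Pt) ∈ convexHull ℝ ((S.erase s : Finset Pt) : Set Pt) :=
      subset_convexHull ℝ _ (Finset.mem_coe.2 hx)
    have h1 := hfT x hxh
    rw [hflin, hflin]
    linarith
  have hγ0 : γ ≠ 0 := by
    intro h
    obtain ⟨x, hx⟩ := hne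
    have h1 := hlt x hx
    rw [h] at h1
    simp [lin] at h1
  have hind1 : ∀ m : ℝ, ¬(m * γ.1 - (-γ.2, γ.1).1 = 0 ∧ m * γ.2 - (-γ.2, γ.1).2 = 0) := by
    rintro m ⟨h1, h2⟩
    replace h1 : m * γ.1 - -γ.2 = 0 := h1
    replace h2 : m * γ.2 - γ.1 = 0 := h2
    apply hγ0
    have h3 : γ.2 * (m ^ 2 + 1) = 0 := by linear_combination m * h2 + h1
    have hg2 : γ.2 = 0 := by
      rcases mul_eq_zero.1 h3 with h | h
      · exact h
      · nlinarith
    have hg1 : γ.1 = 0 := by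
      rw [hg2] at h2
      linarith
    exact Prod.ext hg1 hg2
  have hind2 : ∀ m : ℝ, ¬(m * γ.1 - (γ.2, -γ.1).1 = 0 ∧ m * γ.2 - (γ.2, -γ.1).2 = 0) := by
    rintro m ⟨h1, h2⟩
    replace h1 : m * γ.1 - γ.2 = 0 := h1
    replace h2 : m * γ.2 - -γ.1 = 0 := h2
    apply hγ0
    have h3 : γ.1 * (m ^ 2 + 1) = 0 := by linear_combination m * h1 + h2
    have hg1 : γ.1 = 0 := by
      rcases mul_eq_zero.1 h3 with h | h
      · exact h
      · nlinarith
    have hg2 : γ.2 = 0 := by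
      rw [hg1] at h1
      linarith
    exact Prod.ext hg1 hg2
  obtain ⟨v₁, hv₁T, w₁, c₁, hw₁0, hw₁s, hw₁v, hstrict₁, hmax₁, heq₁⟩ :=
    support_aux S hgp hs γ (-γ.2, γ.1) hlt hind1 hne
  by_cases hv1 : v₁ = t
  · obtain ⟨v₂, hv₂T, w₂, c₂, hw₂0, hw₂s, hw₂v, hstrict₂, hmax₂, heq₂⟩ :=
      support_aux S hgp hs γ (γ.2, -γ.1) hlt hind2 hne
    by_cases hv2 : v₂ = t
    · exfalso
      obtain ⟨x₀, hx₀T, hx₀t⟩ := Finset.exists_mem_ne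
        (by rw [Finset.card_erase_of_mem hs]; omega) t
      have hv12 : v₂ = v₁ := by rw [hv2, hv1]
      have hcst : (lin (-γ.2, γ.1) s - lin (-γ.2, γ.1) x₀) / (lin γ s - lin γ x₀)
          = (lin (-γ.2, γ.1) s - lin (-γ.2, γ.1) v₁) / (lin γ s - lin γ v₁) := by
        have a1 := hmax₁ x₀ hx₀T
        have a2 := hmax₂ x₀ hx₀T
        rw [hv12] at a2
        have e1 : ∀ y : Pt, lin (γ.2, -γ.1) s - lin (γ.2, -γ.1) y
            = -(lin (-γ.2, γ.1) s - lin (-γ.2, γ.1) y) := by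
          intro y
          simp [lin]
          ring
        rw [e1, e1, neg_div, neg_div, neg_le_neg_iff] at a2
        exact le_antisymm a1 a2
      have hx₀c : lin w₁ x₀ = c₁ := heq₁ x₀ hx₀T hcst
      have hwt : lin w₁ t = c₁ := hv1 ▸ hw₁v
      have hx₀t' : x₀ ≠ t := hx₀t
      have hcol : Collinear ℝ ({x₀, s, t} : Set Pt) := by
        apply collinear_of_lin hw₁0 (c := c₁)
        rintro p (rfl | rfl | rfl)
        exacts [hx₀c, hw₁s, hwt]
      have hx₀S : x₀ ∈ S := Finset.mem_of_mem_erase hx₀T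
      exact hgp x₀ (Finset.mem_coe.2 hx₀S) s (Finset.mem_coe.2 hs) t (Finset.mem_coe.2 ht)
        (Finset.ne_of_mem_erase hx₀T) hx₀t hst hcol
    · exact ⟨v₂, Finset.mem_of_mem_erase hv₂T, Finset.ne_of_mem_erase hv₂T, hv2,
        w₂, c₂, hw₂s, hw₂v, hstrict₂⟩
  · exact ⟨v₁, Finset.mem_of_mem_erase hv₁T, Finset.ne_of_mem_erase hv₁T, hv1,
      w₁, c₁, hw₁s, hw₁v, hstrict₁⟩

lemma extreme_of_frontier {S : Finset Pt} (hgp : GenPos (S : Set Pt)) {s : Pt} (hs : s ∈ S)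
    (hsf : s ∈ frontier (convexHull ℝ (S : Set Pt))) :
    s ∉ convexHull ℝ ((S : Set Pt) \ {s}) := by
  intro hmem
  classical
  have hTc : ((S.erase s : Finset Pt) : Set Pt) = (S : Set Pt) \ {s} := Finset.coe_erase s S
  rw [← hTc] at hmem
  by_cases htop : affineSpan ℝ (S : Set Pt) = ⊤
  · have hconv : Convex ℝ (convexHull ℝ (S : Set Pt)) := convex_convexHull ℝ _
    have hint : (interior (convexHull ℝ (S : Set Pt))).Nonempty := by
      rw [hconv.interior_nonempty_iff_affineSpan_eq_top, affineSpan_convexHull]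
      exact htop
    obtain ⟨a₀, ha₀⟩ := hint
    have hnint : s ∉ interior (convexHull ℝ (S : Set Pt)) := hsf.2
    obtain ⟨f, hf⟩ := geometric_hahn_banach_open_point hconv.interior isOpen_interior hnint
    have hfa := hf a₀ ha₀
    have hfle : ∀ y ∈ convexHull ℝ (S : Set Pt), f y ≤ f s := by
      intro y hy
      by_contra hgt
      push_neg at hgt
      have hay : f a₀ < f y := lt_trans hfa hgt
      have hd : 0 < f y - f a₀ := by linarith
      set ε : ℝ := (f y - f s) / (2 * (f y - f a₀)) with hε
      have hε0 : 0 < ε := div_pos (by linarith) (by linarith)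
      have hε1 : ε < 1 := by
        rw [hε, div_lt_one (by linarith)]
        linarith
      have hz : (1 - ε) • y + ε • a₀ ∈ interior (convexHull ℝ (S : Set Pt)) := by
        apply hconv.openSegment_self_interior_subset_interior hy ha₀
        exact ⟨1 - ε, ε, by linarith, hε0, by ring, rfl⟩
      have hlt := hf _ hz
      rw [map_add, map_smul, map_smul, smul_eq_mul, smul_eq_mul] at hlt
      have hεle : ε * (f y - f a₀) = (f y - f s) / 2 := by
        rw [hε]
        field_simp
      nlinarith
    set wf : Pt := (f (1, 0), f (0, 1)) with hwf
    have hflin : ∀ x : Pt, lin wf x = f x := by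
      intro x
      have hx : x = x.1 • ((1 : ℝ), (0 : ℝ)) + x.2 • ((0 : ℝ), (1 : ℝ)) := by
        refine Prod.ext ?_ ?_ <;> simp
      conv_rhs => rw [hx]
      rw [map_add, map_smul, map_smul]
      simp only [lin, hwf, smul_eq_mul]
      ring
    have hwf0 : wf ≠ 0 := by
      intro h
      have h1 := hflin a₀
      have h2 := hflin s
      rw [h] at h1 h2
      simp [lin] at h1 h2
      rw [← h1, ← h2] at hfa
      exact lt_irrefl 0 hfa
    rw [Finset.convexHull_eq] at hmem
    obtain ⟨wt, hwt0, hwt1, hwtc⟩ := hmem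
    rw [Finset.centerMass_eq_of_sum_1 _ id hwt1] at hwtc
    have hsum : ∑ y ∈ S.erase s, wt y • y = s := by
      simpa using hwtc
    have hfsum : ∑ y ∈ S.erase s, wt y * f y = f s := by
      have h1 := congrArg f hsum
      rw [map_sum] at h1
      simpa [map_smul, smul_eq_mul] using h1
    have hterm : ∀ y ∈ S.erase s, wt y * (f s - f y) = 0 := by
      have hsum0 : ∑ y ∈ S.erase s, wt y * (f s - f y) = 0 := by
        have h1 : ∑ y ∈ S.erase s, wt y * f s = f s := by
          rw [← Finset.sum_mul, hwt1, one_mul]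
        have h2 : ∑ y ∈ S.erase s, wt y * (f s - f y)
            = (∑ y ∈ S.erase s, wt y * f s) - ∑ y ∈ S.erase s, wt y * f y := by
          rw [← Finset.sum_sub_distrib]
          exact Finset.sum_congr rfl fun y _ => by ring
        rw [h2, h1, hfsum, sub_self]
      refine (Finset.sum_eq_zero_iff_of_nonneg ?_).1 hsum0
      intro i hi
      have hi1 := hwt0 i hi
      have hi2 : f i ≤ f s := by
        apply hfle
        exact subset_convexHull ℝ _ (Finset.mem_coe.2 (Finset.mem_of_mem_erase hi))
      have : 0 ≤ f s - f i := by linarith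
      positivity
    obtain ⟨a, haT, hwa⟩ := Finset.exists_ne_zero_of_sum_ne_zero
      (by rw [hwt1]; exact one_ne_zero)
    by_cases hb : ∃ b ∈ S.erase s, wt b ≠ 0 ∧ b ≠ a
    · obtain ⟨b, hbT, hwb, hba⟩ := hb
      have hfa' : f a = f s := by
        rcases mul_eq_zero.1 (hterm a haT) with h | h
        · exact absurd h hwa
        · linarith
      have hfb' : f b = f s := by
        rcases mul_eq_zero.1 (hterm b hbT) with h | h
        · exact absurd h hwb
        · linarith
      have hcol : Collinear ℝ ({a, b, s} : Set Pt) := by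
        apply collinear_of_lin hwf0 (c := f s)
        rintro p (rfl | rfl | rfl)
        · rw [hflin]; exact hfa'
        · rw [hflin]; exact hfb'
        · rw [hflin]
      exact hgp a (Finset.mem_coe.2 (Finset.mem_of_mem_erase haT))
        b (Finset.mem_coe.2 (Finset.mem_of_mem_erase hbT)) s (Finset.mem_coe.2 hs)
        (Ne.symm hba) (Finset.ne_of_mem_erase haT) (Finset.ne_of_mem_erase hbT) hcol
    · push_neg at hb
      have hall : ∀ b ∈ S.erase s, b ≠ a → wt b = 0 := by
        intro b hbT hba
        by_contra h
        exact hba (hb b hbT h)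
      have h1 : ∑ y ∈ S.erase s, wt y • y = wt a • a :=
        Finset.sum_eq_single a (fun b hbT hba => by rw [hall b hbT hba, zero_smul])
          (fun h => absurd haT h)
      have h2 : ∑ y ∈ S.erase s, wt y = wt a :=
        Finset.sum_eq_single a (fun b hbT hba => hall b hbT hba) (fun h => absurd haT h)
      have hwa1 : wt a = 1 := by rw [← h2, hwt1]
      have hsa : s = a := by
        rw [← hsum, h1, hwa1, one_smul]
      exact Finset.ne_of_mem_erase haT hsa.symm
  · have hcol : Collinear ℝ (S : Set Pt) := by
      have hvs : vectorSpan ℝ (S : Set Pt) ≠ ⊤ := by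
        intro h
        exact htop ((AffineSubspace.affineSpan_eq_top_iff_vectorSpan_eq_top_of_nonempty ℝ Pt Pt
          ⟨s, Finset.mem_coe.2 hs⟩).2 h)
      have hlt : Module.finrank ℝ (vectorSpan ℝ (S : Set Pt)) < Module.finrank ℝ Pt :=
        Submodule.finrank_lt hvs
      have h2 : Module.finrank ℝ Pt = 2 := by
        simp [Module.finrank_prod]
      rw [collinear_iff_finrank_le_one]
      omega
    have hTne : (S.erase s).Nonempty := by
      have := convexHull_nonempty_iff.1 ⟨s, hmem⟩
      rwa [Finset.coe_nonempty] at this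
    obtain ⟨a, haT⟩ := hTne
    by_cases hb : ∃ b ∈ S.erase s, b ≠ a
    · obtain ⟨b, hbT, hba⟩ := hb
      have hsub : Collinear ℝ ({a, b, s} : Set Pt) := by
        apply hcol.subset
        rintro p (rfl | rfl | rfl)
        · exact Finset.mem_coe.2 (Finset.mem_of_mem_erase haT)
        · exact Finset.mem_coe.2 (Finset.mem_of_mem_erase hbT)
        · exact Finset.mem_coe.2 hs
      exact hgp a (Finset.mem_coe.2 (Finset.mem_of_mem_erase haT))
        b (Finset.mem_coe.2 (Finset.mem_of_mem_erase hbT)) s (Finset.mem_coe.2 hs)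
        (Ne.symm hba) (Finset.ne_of_mem_erase haT) (Finset.ne_of_mem_erase hbT) hsub
    · push_neg at hb
      have hsub : ((S.erase s : Finset Pt) : Set Pt) ⊆ {a} := fun p hp =>
        hb p (Finset.mem_coe.1 hp)
      have h2 : convexHull ℝ ((S.erase s : Finset Pt) : Set Pt) ⊆ {a} := by
        have := convexHull_mono hsub (𝕜 := ℝ)
        rwa [convexHull_singleton] at this
      have hsa : s = a := h2 hmem
      exact Finset.ne_of_mem_erase haT hsa.symm

lemma genpos_mono {A B : Set Pt} (h : A ⊆ B) (hg : GenPos B) : GenPos A :=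
  fun a ha b hb c hc hab hac hbc => hg a (h ha) b (h hb) c (h hc) hab hac hbc

lemma key : ∀ (n : ℕ) (S : Finset Pt), S.card ≤ n → GenPos (S : Set Pt) →
    ∀ s t : Pt, s ∈ S → t ∈ S → s ≠ t →
    s ∉ convexHull ℝ ((S : Set Pt) \ {s}) → t ∉ convexHull ℝ ((S : Set Pt) \ {t}) →
    ∃ l : List Pt, PlaneSpanningPath (S : Set Pt) l ∧
      l.head? = some s ∧ l.getLast? = some t := by
  intro n
  induction n with
  | zero =>
    intro S hcard _ s t hsS _ _ _ _
    have := Finset.card_pos.2 ⟨s, hsS⟩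
    omega
  | succ n IH =>
    intro S hcard hgp s t hs ht hst hsx htx
    by_cases h2 : S.card ≤ 2
    · have hsub : ({s, t} : Finset Pt) ⊆ S := by
        intro x hx
        rcases Finset.mem_insert.1 hx with rfl | hx
        · exact hs
        · rw [Finset.mem_singleton.1 hx]; exact ht
      have hScard : S.card ≤ ({s, t} : Finset Pt).card := by
        rw [Finset.card_pair hst]
        exact h2
      have hSeq : S = {s, t} := (Finset.eq_of_subset_of_card_le hsub hScard).symm
      refine ⟨[s, t], ⟨⟨?_, ?_⟩, ?_⟩, rfl, rfl⟩
      · simp [hst]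
      · ext x
        simp [hSeq, List.mem_cons]
      · intro i j hij hj
        simp only [List.length_cons, List.length_nil] at hj
        omega
    · have h3 : 3 ≤ S.card := by omega
      obtain ⟨u, huS, hus, hut, w, c, hws, hwu, hwlt⟩ :=
        exists_hull_edge S h3 hgp hs ht hst hsx
      have hTc : ((S.erase s : Finset Pt) : Set Pt) = (S : Set Pt) \ {s} :=
        Finset.coe_erase s S
      have hTcard : (S.erase s).card ≤ n := by
        rw [Finset.card_erase_of_mem hs]
        omega
      have hTgp : GenPos ((S.erase s : Finset Pt) : Set Pt) := by
        apply genpos_mono _ hgp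
        rw [hTc]
        exact Set.diff_subset
      have huT : u ∈ S.erase s := Finset.mem_erase.2 ⟨hus, huS⟩
      have htT : t ∈ S.erase s := Finset.mem_erase.2 ⟨Ne.symm hst, ht⟩
      have huext : u ∉ convexHull ℝ (((S.erase s : Finset Pt) : Set Pt) \ {u}) := by
        intro hmem
        have hsub : ((S.erase s : Finset Pt) : Set Pt) \ {u} ⊆ {x : Pt | lin w x < c} := by
          rintro x ⟨hx1, hx2⟩
          rw [hTc] at hx1
          exact hwlt x (Finset.mem_coe.1 (by exact_mod_cast hx1.1)) hx1.2 hx2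
        have := convexHull_min hsub (convex_lin_lt w c) hmem
        simp only [Set.mem_setOf_eq, hwu] at this
        exact lt_irrefl c this
      have htext : t ∉ convexHull ℝ (((S.erase s : Finset Pt) : Set Pt) \ {t}) := by
        intro hmem
        apply htx
        apply convexHull_mono _ hmem
        rw [hTc]
        exact Set.diff_subset_diff_left Set.diff_subset
      obtain ⟨l', ⟨⟨hnd', hset'⟩, hpl'⟩, hhd', hlast'⟩ :=
        IH (S.erase s) hTcard hTgp u t huT htT hut huext htext
      have hmem' : ∀ x, x ∈ l' ↔ x ∈ S.erase s := by
        intro x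
        constructor
        · intro hx
          have : x ∈ ((S.erase s : Finset Pt) : Set Pt) := hset' ▸ hx
          exact Finset.mem_coe.1 this
        · intro hx
          have : x ∈ ((S.erase s : Finset Pt) : Set Pt) := Finset.mem_coe.2 hx
          rw [← hset'] at this
          exact this
      obtain ⟨r, rfl⟩ : ∃ r, l' = u :: r := by
        cases l' with
        | nil => simp at hhd'
        | cons a r =>
          have : a = u := by simpa using hhd'
          exact ⟨r, by rw [this]⟩
      refine ⟨s :: u :: r, ⟨⟨?_, ?_⟩, ?_⟩, rfl, ?_⟩
      · refine List.nodup_cons.2 ⟨?_, hnd'⟩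
        intro hsl
        have := (hmem' s).1 hsl
        exact (Finset.mem_erase.1 this).1 rfl
      · ext x
        simp only [Set.mem_setOf_eq, List.mem_cons]
        constructor
        · rintro (rfl | hx)
          · exact Finset.mem_coe.2 hs
          · have := (hmem' x).1 (List.mem_cons.2 hx)
            exact Finset.mem_coe.2 (Finset.mem_of_mem_erase this)
        · intro hx
          by_cases hxs : x = s
          · exact Or.inl hxs
          · right
            exact List.mem_cons.1
              ((hmem' x).2 (Finset.mem_erase.2 ⟨hxs, Finset.mem_coe.1 hx⟩))
      · -- PlaneList
        intro i j hij hj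
        simp only [List.length_cons] at hj
        match i, hij with
        | 0, _ =>
          obtain ⟨m, rfl⟩ : ∃ m, j = m + 1 := ⟨j - 1, by omega⟩
          have hm1 : m < (u :: r).length := by simp at hj ⊢; omega
          have hm2 : m + 1 < (u :: r).length := by simp at hj ⊢; omega
          have hget : ∀ k (hk : k < (u :: r).length),
              (s :: u :: r)[k + 1]! = (u :: r)[k]'hk := by
            intro k hk
            rw [List.getElem!_cons_succ, getElem!_pos (u :: r) k hk]
          rw [show ((s :: u :: r)[0]!) = s from List.getElem!_cons_zero,
            show ((s :: u :: r)[0 + 1]!) = u from by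
              rw [List.getElem!_cons_succ, List.getElem!_cons_zero],
            hget m hm1, hget (m + 1) hm2]
          set p := (u :: r)[m]'hm1 with hp
          set q := (u :: r)[m + 1]'hm2 with hq
          have hpl : p ∈ u :: r := List.getElem_mem hm1
          have hql : q ∈ u :: r := List.getElem_mem hm2
          have hpT := (hmem' p).1 hpl
          have hqT := (hmem' q).1 hql
          have hpq : p ≠ q := by
            have := List.pairwise_iff_getElem.1 hnd' m (m + 1) hm1 hm2 (by omega)
            exact this
          apply seg_inter_aux hws hwu
          · by_cases hpu : p = u
            · exact Or.inr hpu
            · exact Or.inl (hwlt p (Finset.mem_of_mem_erase hpT)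
                (Finset.ne_of_mem_erase hpT) hpu)
          · by_cases hqu : q = u
            · exact Or.inr hqu
            · exact Or.inl (hwlt q (Finset.mem_of_mem_erase hqT)
                (Finset.ne_of_mem_erase hqT) hqu)
          · exact hpq
        | (k + 1), _ =>
          obtain ⟨m, rfl⟩ : ∃ m, j = m + 1 := ⟨j - 1, by omega⟩
          have hmain := hpl' k m (by omega) (by simp at hj ⊢; omega)
          simpa only [List.getElem!_cons_succ] using hmain
      · rw [List.getLast?_cons_cons]
        exact hlast'

end Stmt4Aux

theorem stmt_4 (S : Finset Pt) (hgp : GenPos (S : Set Pt))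
    (s t : Pt) (hs : s ∈ S) (ht : t ∈ S) (hst : s ≠ t)
    (hsb : s ∈ frontier (convexHull ℝ (S : Set Pt)))
    (htb : t ∈ frontier (convexHull ℝ (S : Set Pt))) :
    ∃ l : List Pt, PlaneSpanningPath (S : Set Pt) l ∧
      l.head? = some s ∧ l.getLast? = some t := by
  obtain ⟨l, h1, h2, h3⟩ := Stmt4Aux.key S.card S le_rfl hgp s t hs ht hst
    (Stmt4Aux.extreme_of_frontier hgp hs hsb) (Stmt4Aux.extreme_of_frontier hgp ht htb)
  exact ⟨l, h1, h2, h3⟩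
end

section
/- Every balanced separated partition (S₁, S₂) of a finite planar point set S in general position admits a zig-zag path: a plane spanning path of S on which the points of S₁ and S₂ alternate. -/
namespace ZigZagAux

noncomputable section

/-- Affine "x-coordinate" w.r.t. the separating functional. -/
def Xf (u v c : ℝ) (p : Pt) : ℝ := u * p.1 + v * p.2 - c
/-- Affine "y-coordinate" (rotated functional). -/
def Yf (u v : ℝ) (p : Pt) : ℝ := -v * p.1 + u * p.2
def nmf (u v c : ℝ) (p q : Pt) : ℝ := Yf u v p * Xf u v c q - Xf u v c p * Yf u v q
def dnf (u v c : ℝ) (p q : Pt) : ℝ := Xf u v c q - Xf u v c p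
def hvf (u v c : ℝ) (p q : Pt) : ℝ := nmf u v c p q / dnf u v c p q

lemma I3 (u v c : ℝ) (p q r s : Pt) :
    (u^2+v^2) * (Xf u v c q * ccw r s p - Xf u v c p * ccw r s q)
      = nmf u v c p q * dnf u v c r s - nmf u v c r s * dnf u v c p q := by
  simp only [Xf, Yf, nmf, dnf, ccw]; ring

lemma ccw_self_left (r s : Pt) : ccw r s r = 0 := by simp only [ccw]; ring
lemma ccw_self_right (r s : Pt) : ccw r s s = 0 := by simp only [ccw]; ring

lemma ccw_affine (r s x y : Pt) (a b : ℝ) (hab : a + b = 1) :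
    ccw r s (a • x + b • y) = a * ccw r s x + b * ccw r s y := by
  have hb : b = 1 - a := by linarith
  subst hb
  have h1 : (a • x + (1-a) • y).1 = a * x.1 + (1-a) * y.1 := by simp
  have h2 : (a • x + (1-a) • y).2 = a * x.2 + (1-a) * y.2 := by simp
  simp only [ccw, h1, h2]; ring

lemma seg_ccw_le {r s x y z : Pt} (hx : ccw r s x ≤ 0) (hy : ccw r s y ≤ 0)
    (hz : z ∈ segment ℝ x y) : ccw r s z ≤ 0 := by
  obtain ⟨a, b, ha, hb, hab, H⟩ := hz
  rw [← H, ccw_affine r s x y a b hab]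
  have := mul_nonpos_of_nonneg_of_nonpos ha hx
  have := mul_nonpos_of_nonneg_of_nonpos hb hy
  linarith

lemma seg_ccw_zero {x y z : Pt} (hz : z ∈ segment ℝ x y) : ccw x y z = 0 := by
  obtain ⟨a, b, ha, hb, hab, H⟩ := hz
  rw [← H, ccw_affine x y x y a b hab, ccw_self_left, ccw_self_right]
  ring

lemma seg_endpoint {r s p e z : Pt} (hp : 0 < ccw r s p) (he : ccw r s e = 0)
    (hz : z ∈ segment ℝ p e) (hle : ccw r s z ≤ 0) : z = e := by
  obtain ⟨a, b, ha, hb, hab, H⟩ := hz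
  rw [← H, ccw_affine r s p e a b hab, he, mul_zero, add_zero] at hle
  have ha0 : a = 0 := by nlinarith
  rw [← H, ha0, zero_smul, zero_add]
  have hb1 : b = 1 := by linarith
  rw [hb1, one_smul]

lemma param_of_ccw {a b p : Pt} (hab : b ≠ a) (h : ccw a b p = 0) :
    ∃ r : ℝ, p = r • (b - a) + a := by
  simp only [ccw] at h
  by_cases h1 : b.1 - a.1 = 0
  · have h2 : b.2 - a.2 ≠ 0 := by
      intro h2; apply hab; ext
      · linarith
      · linarith
    refine ⟨(p.2 - a.2)/(b.2 - a.2), ?_⟩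
    have hc1 : p.1 = a.1 := by
      have h3 : (b.2 - a.2) * (p.1 - a.1) = 0 := by linear_combination (p.2 - a.2) * h1 - h
      rcases mul_eq_zero.mp h3 with h3 | h3
      · exact absurd h3 h2
      · linarith
    have e1 : (((p.2 - a.2)/(b.2 - a.2)) • (b - a) + a).1
        = (p.2 - a.2)/(b.2 - a.2) * (b.1 - a.1) + a.1 := by simp
    have e2 : (((p.2 - a.2)/(b.2 - a.2)) • (b - a) + a).2
        = (p.2 - a.2)/(b.2 - a.2) * (b.2 - a.2) + a.2 := by simp
    rw [Prod.ext_iff, e1, e2, h1]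
    constructor
    · simpa using hc1
    · field_simp
      ring
  · refine ⟨(p.1 - a.1)/(b.1 - a.1), ?_⟩
    have e1 : (((p.1 - a.1)/(b.1 - a.1)) • (b - a) + a).1
        = (p.1 - a.1)/(b.1 - a.1) * (b.1 - a.1) + a.1 := by simp
    have e2 : (((p.1 - a.1)/(b.1 - a.1)) • (b - a) + a).2
        = (p.1 - a.1)/(b.1 - a.1) * (b.2 - a.2) + a.2 := by simp
    rw [Prod.ext_iff, e1, e2]
    constructor
    · field_simp
      ring
    · rw [div_mul_eq_mul_div, eq_comm, div_add' _ _ _ h1, div_eq_iff h1]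
      nlinarith

lemma collinear_of_ccw_eq_zero {a b c : Pt} (h : ccw a b c = 0) :
    Collinear ℝ ({a, b, c} : Set Pt) := by
  by_cases hab : b = a
  · subst hab
    have hset : ({b, b, c} : Set Pt) = {b, c} := by
      rw [Set.insert_idem]
    rw [hset]
    exact collinear_pair ℝ b c
  · rw [collinear_iff_of_mem (Set.mem_insert a {b, c})]
    refine ⟨b - a, fun p hp => ?_⟩
    have hvadd : ∀ (r : ℝ) (x : Pt), r • (b - a) +ᵥ x = r • (b - a) + x := fun _ _ => rfl
    rcases hp with rfl | rfl | hp
    · exact ⟨0, by simp [hvadd]⟩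
    · exact ⟨1, by simp [hvadd]⟩
    · have hpc : p = c := by simpa using hp
      subst hpc
      obtain ⟨r, hr⟩ := param_of_ccw hab h
      exact ⟨r, by rw [hvadd]; exact hr⟩

/-- `(p,q)` maximizes the height of the crossing with the separating line. -/
def MaxP (u v c : ℝ) (A B : Finset Pt) (p q : Pt) : Prop :=
  p ∈ A ∧ q ∈ B ∧ ∀ p' ∈ A, ∀ q' ∈ B, hvf u v c p' q' ≤ hvf u v c p q

lemma exists_maxP (u v c : ℝ) {A B : Finset Pt} (hA : A.Nonempty) (hB : B.Nonempty) :
    ∃ p q, MaxP u v c A B p q := by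
  obtain ⟨pq, hpq, hmax⟩ :=
    Finset.exists_max_image (A ×ˢ B) (fun z => hvf u v c z.1 z.2) (hA.product hB)
  exact ⟨pq.1, pq.2, (Finset.mem_product.mp hpq).1, (Finset.mem_product.mp hpq).2,
    fun p' hp' q' hq' => hmax (p', q') (Finset.mem_product.mpr ⟨hp', hq'⟩)⟩

lemma maxP_below (u v c : ℝ) (hk : 0 < u^2+v^2) {A B : Finset Pt} {p q : Pt}
    (hXA : ∀ x ∈ A, Xf u v c x < 0) (hXB : ∀ x ∈ B, 0 < Xf u v c x)
    (hgp : ∀ a ∈ A ∪ B, ∀ b ∈ A ∪ B, ∀ e ∈ A ∪ B, a ≠ b → a ≠ e → b ≠ e → ccw a b e ≠ 0)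
    (hm : MaxP u v c A B p q) :
    ∀ s ∈ A ∪ B, s ≠ p → s ≠ q → ccw p q s < 0 := by
  obtain ⟨hp, hq, hmax⟩ := hm
  intro s hs hsp hsq
  have hXp := hXA p hp
  have hXq := hXB q hq
  have hpq : p ≠ q := by intro h; rw [h] at hXp; linarith
  have hne : ccw p q s ≠ 0 :=
    hgp p (Finset.mem_union_left _ hp) q (Finset.mem_union_right _ hq) s hs hpq
      (Ne.symm hsp) (Ne.symm hsq)
  have hdpq : 0 < dnf u v c p q := by simp only [dnf]; linarith
  rcases Finset.mem_union.mp hs with hsA | hsB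
  · have hXs := hXA s hsA
    have hdsq : 0 < dnf u v c s q := by simp only [dnf]; linarith
    have hle := hmax s hsA q hq
    rw [hvf, hvf, div_le_div_iff₀ hdsq hdpq] at hle
    have hI := I3 u v c s q p q
    rw [ccw_self_right] at hI
    have keyEq : (u^2+v^2) * (Xf u v c q * ccw p q s)
        = nmf u v c s q * dnf u v c p q - nmf u v c p q * dnf u v c s q := by
      linear_combination hI
    have key : (u^2+v^2) * (Xf u v c q * ccw p q s) ≤ 0 := by rw [keyEq]; linarith
    have hle0 : ccw p q s ≤ 0 := by nlinarith [mul_pos hk hXq]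
    exact lt_of_le_of_ne hle0 hne
  · have hXs := hXB s hsB
    have hdps : 0 < dnf u v c p s := by simp only [dnf]; linarith
    have hle := hmax p hp s hsB
    rw [hvf, hvf, div_le_div_iff₀ hdps hdpq] at hle
    have hI := I3 u v c p s p q
    rw [ccw_self_left] at hI
    have keyEq : (u^2+v^2) * ((-(Xf u v c p)) * ccw p q s)
        = nmf u v c p s * dnf u v c p q - nmf u v c p q * dnf u v c p s := by
      linear_combination hI
    have key : (u^2+v^2) * ((-(Xf u v c p)) * ccw p q s) ≤ 0 := by rw [keyEq]; linarith
    have hle0 : ccw p q s ≤ 0 := by nlinarith [mul_pos hk (neg_pos.mpr hXp)]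
    exact lt_of_le_of_ne hle0 hne

lemma maxP_above (u v c : ℝ) (hk : 0 < u^2+v^2) {A B A' B' : Finset Pt} {p q r s w : Pt}
    (hXA : ∀ x ∈ A, Xf u v c x < 0) (hXB : ∀ x ∈ B, 0 < Xf u v c x)
    (hsubA : A' ⊆ A) (hsubB : B' ⊆ B)
    (hgp : ∀ a ∈ A ∪ B, ∀ b ∈ A ∪ B, ∀ e ∈ A ∪ B, a ≠ b → a ≠ e → b ≠ e → ccw a b e ≠ 0)
    (hm : MaxP u v c A B p q) (hm' : MaxP u v c A' B' r s)
    (hw : w = p ∨ w = q)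
    (hcov : ∀ t ∈ A ∪ B, t = w ∨ t ∈ A' ∪ B')
    (hwr : w ≠ r) (hws : w ≠ s)
    (hbel : ∀ t ∈ A' ∪ B', t ≠ r → t ≠ s → ccw r s t < 0) :
    0 < ccw r s w := by
  obtain ⟨hp, hq, hmax⟩ := hm
  obtain ⟨hr, hs', hmax'⟩ := hm'
  have hXp := hXA p hp
  have hXq := hXB q hq
  have hXr := hXA r (hsubA hr)
  have hXs := hXB s (hsubB hs')
  have hrs : r ≠ s := by intro h; rw [h] at hXr; linarith
  have hwmem : w ∈ A ∪ B := by
    rcases hw with rfl | rfl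
    · exact Finset.mem_union_left _ hp
    · exact Finset.mem_union_right _ hq
  have hne : ccw r s w ≠ 0 :=
    hgp r (Finset.mem_union_left _ (hsubA hr)) s (Finset.mem_union_right _ (hsubB hs'))
      w hwmem hrs (Ne.symm hwr) (Ne.symm hws)
  by_contra hcon
  push_neg at hcon
  have hwlt : ccw r s w < 0 := lt_of_le_of_ne hcon hne
  have hrsle : ∀ t ∈ A ∪ B, ccw r s t ≤ 0 := by
    intro t ht
    rcases hcov t ht with rfl | ht'
    · exact le_of_lt hwlt
    · by_cases htr : t = r
      · rw [htr, ccw_self_left]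
      · by_cases hts : t = s
        · rw [hts, ccw_self_right]
        · exact le_of_lt (hbel t ht' htr hts)
  have hcp : ccw r s p ≤ 0 := hrsle p (Finset.mem_union_left _ hp)
  have hcq : ccw r s q ≤ 0 := hrsle q (Finset.mem_union_right _ hq)
  have hlt : (u^2+v^2) * (Xf u v c q * ccw r s p - Xf u v c p * ccw r s q) < 0 := by
    have hsum : Xf u v c q * ccw r s p - Xf u v c p * ccw r s q < 0 := by
      rcases hw with rfl | rfl
      · have t1 : Xf u v c q * ccw r s w < 0 := mul_neg_of_pos_of_neg hXq hwlt
        have t2 : (-(Xf u v c w)) * ccw r s q ≤ 0 :=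
          mul_nonpos_of_nonneg_of_nonpos (by linarith) hcq
        nlinarith
      · have t1 : (-(Xf u v c p)) * ccw r s w < 0 :=
          mul_neg_of_pos_of_neg (by linarith) hwlt
        have t2 : Xf u v c w * ccw r s p ≤ 0 :=
          mul_nonpos_of_nonneg_of_nonpos (le_of_lt hXq) hcp
        nlinarith
    exact mul_neg_of_pos_of_neg hk hsum
  rw [I3] at hlt
  have hdpq : 0 < dnf u v c p q := by simp only [dnf]; linarith
  have hdrs : 0 < dnf u v c r s := by simp only [dnf]; linarith
  have hhlt : hvf u v c p q < hvf u v c r s := by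
    rw [hvf, hvf, div_lt_div_iff₀ hdpq hdrs]; linarith
  have := hmax r (hsubA hr) s (hsubB hs')
  linarith

lemma getElem!_ne_of_nodup {l : List Pt} (hn : l.Nodup) {i j : ℕ}
    (hi : i < l.length) (hj : j < l.length) (hij : i ≠ j) : l[i]! ≠ l[j]! := by
  rw [getElem!_pos l i hi, getElem!_pos l j hj]
  exact fun h => hij (List.Nodup.getElem_inj_iff hn |>.mp h)

lemma head?_getElem! {l : List Pt} {x : Pt} (h : l.head? = some x) : l[0]! = x := by
  cases l with
  | nil => simp at h
  | cons a t => simp at h; simp [h]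

end

end ZigZagAux


namespace ZigZagAux

noncomputable section

lemma planeList_small {l : List Pt} (h : l.length ≤ 2) : PlaneList l := by
  intro i j hij hj
  omega

lemma getElem!_mem_span {l : List Pt} {T : Finset Pt} (hspan : {x : Pt | x ∈ l} = ↑T)
    {i : ℕ} (hi : i < l.length) : l[i]! ∈ T := by
  rw [getElem!_pos l i hi]
  have hm : l[i] ∈ l := List.getElem_mem hi
  have hx := Set.ext_iff.mp hspan l[i]
  simp only [Set.mem_setOf_eq, Finset.mem_coe] at hx
  exact hx.mp hm

lemma planeList_cons {T : Finset Pt} {r s w : Pt} {l' : List Pt}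
    (hgp : ∀ a ∈ T, ∀ b ∈ T, ∀ e ∈ T, a ≠ b → a ≠ e → b ≠ e → ccw a b e ≠ 0)
    (hpl' : PlaneList l')
    (hnd' : l'.Nodup)
    (hmemT : ∀ i, i < l'.length → l'[i]! ∈ T)
    (hwT : w ∈ T)
    (hTle : ∀ i, i < l'.length → ccw r s l'[i]! ≤ 0)
    (habove : 0 < ccw r s w)
    (hhead : ccw r s l'[0]! = 0)
    (hwne : ∀ i, i < l'.length → w ≠ l'[i]!) :
    PlaneList (w :: l') := by
  intro i j hij hj
  simp only [List.length_cons] at hj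
  match i, hij with
  | Nat.succ i', hij =>
    obtain ⟨j', rfl⟩ : ∃ j', j = j' + 1 := ⟨j - 1, by omega⟩
    simp only [List.getElem!_cons_succ]
    exact hpl' i' j' (by omega) (by omega)
  | 0, hij =>
    obtain ⟨j', rfl⟩ : ∃ j', j = j' + 1 := ⟨j - 1, by omega⟩
    simp only [List.getElem!_cons_succ, List.getElem!_cons_zero]
    have hj' : j' < l'.length := by omega
    have hj'1 : j' + 1 < l'.length := by omega
    have h0 : 0 < l'.length := by omega
    intro z hz
    obtain ⟨hz1, hz2⟩ := hz
    have hzle : ccw r s z ≤ 0 :=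
      seg_ccw_le (hTle j' hj') (hTle (j'+1) hj'1) hz2
    have hze : z = l'[0]! := seg_endpoint habove hhead hz1 hzle
    subst hze
    constructor
    · exact Set.mem_insert_iff.mpr (Or.inr (Set.mem_singleton_iff.mpr rfl))
    · by_cases hj0 : j' = 0
      · subst hj0
        exact Set.mem_insert_iff.mpr (Or.inl rfl)
      · exfalso
        have hxy : l'[j']! ≠ l'[j'+1]! := getElem!_ne_of_nodup hnd' hj' hj'1 (by omega)
        have hx0 : l'[j']! ≠ l'[0]! := getElem!_ne_of_nodup hnd' hj' h0 hj0
        have hy0 : l'[j'+1]! ≠ l'[0]! := getElem!_ne_of_nodup hnd' hj'1 h0 (by omega)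
        have hcz : ccw l'[j']! l'[j'+1]! l'[0]! = 0 := seg_ccw_zero hz2
        exact hgp l'[j']! (hmemT j' hj') l'[j'+1]! (hmemT (j'+1) hj'1)
          l'[0]! (hmemT 0 h0) hxy hx0 hy0 hcz

lemma core (u v c : ℝ) (hk : 0 < u^2+v^2) :
    ∀ (N : ℕ) (A B : Finset Pt) (st : Bool),
    A.card + B.card ≤ N →
    (∀ x ∈ A, Xf u v c x < 0) → (∀ x ∈ B, 0 < Xf u v c x) →
    (∀ a ∈ A ∪ B, ∀ b ∈ A ∪ B, ∀ e ∈ A ∪ B, a ≠ b → a ≠ e → b ≠ e → ccw a b e ≠ 0) →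
    (st = true → B.card ≤ A.card ∧ A.card ≤ B.card + 1) →
    (st = false → A.card ≤ B.card ∧ B.card ≤ A.card + 1) →
    ∃ l : List Pt, l.Nodup ∧ {x : Pt | x ∈ l} = ↑(A ∪ B) ∧
      (∀ i, i < l.length → (i % 2 = 0 → l[i]! ∈ (if st then A else B)) ∧
                           (i % 2 = 1 → l[i]! ∈ (if st then B else A))) ∧
      PlaneList l ∧
      (A.Nonempty → B.Nonempty →
        ∃ p q, MaxP u v c A B p q ∧ l.head? = some (if st then p else q)) := by
  intro N
  induction N with
  | zero =>
    intro A B st hcard hXA hXB hgp hbalt hbalf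
    have hA : A = ∅ := Finset.card_eq_zero.mp (by omega)
    have hB : B = ∅ := Finset.card_eq_zero.mp (by omega)
    refine ⟨[], by simp, by simp [hA, hB], by simp, planeList_small (by simp), ?_⟩
    intro h1 _
    rw [hA] at h1
    exact absurd h1 (by simp)
  | succ n IH =>
    intro A B st hcard hXA hXB hgp hbalt hbalf
    have hxy_ne : ∀ x ∈ A, ∀ y ∈ B, x ≠ y := by
      intro x hx y hy h
      have h1 := hXA x hx
      have h2 := hXB y hy
      rw [h] at h1
      linarith
    cases st with
    | true =>
      obtain ⟨hba, hab⟩ := hbalt rfl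
      by_cases hB : B.Nonempty
      · have hAne : A.Nonempty := Finset.card_pos.mp
          (lt_of_lt_of_le (Finset.card_pos.mpr hB) hba)
        obtain ⟨p, q, hm⟩ := exists_maxP u v c hAne hB
        have hp := hm.1
        have hq := hm.2.1
        have hpq : p ≠ q := hxy_ne p hp q hq
        by_cases hA' : (A.erase p).Nonempty
        · -- main case
          have hcard' : (A.erase p).card + B.card ≤ n := by
            rw [Finset.card_erase_of_mem hp]
            have : 1 ≤ A.card := Finset.card_pos.mpr hAne
            omega
          have hXA' : ∀ x ∈ A.erase p, Xf u v c x < 0 :=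
            fun x hx => hXA x (Finset.mem_of_mem_erase hx)
          have hsub : A.erase p ∪ B ⊆ A ∪ B :=
            Finset.union_subset_union_left (Finset.erase_subset p A)
          have hgp' : ∀ a ∈ A.erase p ∪ B, ∀ b ∈ A.erase p ∪ B, ∀ e ∈ A.erase p ∪ B,
              a ≠ b → a ≠ e → b ≠ e → ccw a b e ≠ 0 :=
            fun a ha b hb e he => hgp a (hsub ha) b (hsub hb) e (hsub he)
          have hA'card : (A.erase p).card = A.card - 1 := Finset.card_erase_of_mem hp
          have hcard1 : 1 ≤ A.card := Finset.card_pos.mpr hAne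
          obtain ⟨l', hnd', hspan', hpar', hpl', hhd'⟩ :=
            IH (A.erase p) B false hcard' hXA' hXB hgp'
              (by intro h; exact absurd h (by simp))
              (by intro _; constructor <;> omega)
          obtain ⟨r, s, hm', hhead⟩ := hhd' hA' hB
          simp only [Bool.false_eq_true, if_false] at hhead
          have hl'0 : l'[0]! = s := head?_getElem! hhead
          have hl'len : 0 < l'.length := by
            cases l' with
            | nil => simp at hhead
            | cons a t => simp
          have hbel := maxP_below u v c hk hXA' hXB hgp' hm'
          have hrA' := hm'.1
          have hsB := hm'.2.1
          have hcov : ∀ t ∈ A ∪ B, t = p ∨ t ∈ A.erase p ∪ B := by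
            intro t ht
            rcases Finset.mem_union.mp ht with htA | htB
            · by_cases htp : t = p
              · exact Or.inl htp
              · exact Or.inr (Finset.mem_union_left _ (Finset.mem_erase.mpr ⟨htp, htA⟩))
            · exact Or.inr (Finset.mem_union_right _ htB)
          have hpr : p ≠ r := Ne.symm (Finset.mem_erase.mp hrA').1
          have hps : p ≠ s := hxy_ne p hp s hsB
          have habove : 0 < ccw r s p :=
            maxP_above u v c hk hXA hXB (Finset.erase_subset p A) (le_refl B) hgp
              hm hm' (Or.inl rfl) hcov hpr hps hbel
          have hspanmem : ∀ i, i < l'.length → l'[i]! ∈ A.erase p ∪ B :=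
            fun i hi => getElem!_mem_span hspan' hi
          have hpnotin : p ∉ l' := by
            intro hmem
            have hx := Set.ext_iff.mp hspan' p
            simp only [Set.mem_setOf_eq, Finset.mem_coe] at hx
            rcases Finset.mem_union.mp (hx.mp hmem) with h1 | h1
            · exact (Finset.mem_erase.mp h1).1 rfl
            · exact hxy_ne p hp p h1 rfl
          have hTle : ∀ i, i < l'.length → ccw r s l'[i]! ≤ 0 := by
            intro i hi
            by_cases h1 : l'[i]! = r
            · rw [h1, ccw_self_left]
            · by_cases h2 : l'[i]! = s
              · rw [h2, ccw_self_right]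
              · exact le_of_lt (hbel l'[i]! (hspanmem i hi) h1 h2)
          have hwne : ∀ i, i < l'.length → p ≠ l'[i]! := by
            intro i hi h
            apply hpnotin
            rw [h, getElem!_pos l' i hi]
            exact List.getElem_mem hi
          have hmemT : ∀ i, i < l'.length → l'[i]! ∈ A ∪ B :=
            fun i hi => hsub (hspanmem i hi)
          have hplcons : PlaneList (p :: l') :=
            planeList_cons hgp hpl' hnd' hmemT (Finset.mem_union_left _ hp) hTle
              habove (by rw [hl'0, ccw_self_right]) hwne
          have hABins : A ∪ B = insert p (A.erase p ∪ B) := by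
            rw [← Finset.insert_union, Finset.insert_erase hp]
          refine ⟨p :: l', ?_, ?_, ?_, hplcons, ?_⟩
          · exact List.nodup_cons.mpr ⟨hpnotin, hnd'⟩
          · ext x
            have hx := Set.ext_iff.mp hspan' x
            simp only [Set.mem_setOf_eq, Finset.mem_coe] at hx
            simp only [Set.mem_setOf_eq, List.mem_cons, hABins, Finset.coe_insert,
              Set.mem_insert_iff, Finset.mem_coe]
            rw [hx]
          · intro i hi
            match i with
            | 0 =>
              constructor
              · intro _
                simp only [List.getElem!_cons_zero, if_true]
                exact hp
              · intro h; omega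
            | Nat.succ k =>
              simp only [List.length_cons] at hi
              have hk : k < l'.length := by omega
              obtain ⟨hpe, hpo⟩ := hpar' k hk
              constructor
              · intro hpar
                have hk1 : k % 2 = 1 := by omega
                simp only [List.getElem!_cons_succ, if_true]
                have := hpo hk1
                simp only [Bool.false_eq_true, if_false] at this
                exact Finset.mem_of_mem_erase this
              · intro hpar
                have hk0 : k % 2 = 0 := by omega
                simp only [List.getElem!_cons_succ, if_true]
                have := hpe hk0
                simp only [Bool.false_eq_true, if_false] at this
                exact this
          · intro _ _
            exact ⟨p, q, hm, by simp⟩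
        · -- A.erase p empty : A = {p}, B = {q}
          have hAe : A = {p} := by
            apply Finset.eq_singleton_iff_unique_mem.mpr
            refine ⟨hp, fun x hx => ?_⟩
            by_contra hxp
            exact hA' ⟨x, Finset.mem_erase.mpr ⟨hxp, hx⟩⟩
          have hBcard : B.card ≤ 1 := by
            rw [hAe] at hba; simpa using hba
          have hBe : B = {q} := by
            apply Finset.eq_singleton_iff_unique_mem.mpr
            refine ⟨hq, fun x hx => ?_⟩
            exact Finset.card_le_one.mp hBcard x hx q hq
          refine ⟨[p, q], ?_, ?_, ?_, planeList_small (by simp), ?_⟩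
          · simp [hpq]
          · rw [hAe, hBe]
            ext x
            simp [or_comm]
          · intro i hi
            simp only [List.length_cons, List.length_singleton] at hi
            match i with
            | 0 => exact ⟨fun _ => by simpa using hp, fun h => by omega⟩
            | 1 => exact ⟨fun h => by omega, fun _ => by simpa using hq⟩
          · intro _ _
            exact ⟨p, q, hm, by simp⟩
      · -- B empty
        have hBe : B = ∅ := Finset.not_nonempty_iff_eq_empty.mp hB
        rw [hBe] at hab
        simp only [Finset.card_empty, zero_add] at hab
        by_cases hAe : A.Nonempty
        · obtain ⟨a, hAa⟩ := Finset.card_eq_one.mp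
            (le_antisymm hab (Finset.card_pos.mpr hAe))
          refine ⟨[a], by simp, ?_, ?_, planeList_small (by simp), ?_⟩
          · rw [hAa, hBe]; ext x; simp
          · intro i hi
            simp only [List.length_singleton] at hi
            match i with
            | 0 => exact ⟨fun _ => by simp [hAa], fun h => by omega⟩
          · intro _ h2
            rw [hBe] at h2
            exact absurd h2 (by simp)
        · have hAe' : A = ∅ := Finset.not_nonempty_iff_eq_empty.mp hAe
          refine ⟨[], by simp, by simp [hAe', hBe], by simp,
            planeList_small (by simp), ?_⟩
          intro h1 _
          rw [hAe'] at h1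
          exact absurd h1 (by simp)
    | false =>
      obtain ⟨hba, hab⟩ := hbalf rfl
      by_cases hA : A.Nonempty
      · have hBne : B.Nonempty := Finset.card_pos.mp
          (lt_of_lt_of_le (Finset.card_pos.mpr hA) hba)
        obtain ⟨p, q, hm⟩ := exists_maxP u v c hA hBne
        have hp := hm.1
        have hq := hm.2.1
        have hpq : p ≠ q := hxy_ne p hp q hq
        by_cases hB' : (B.erase q).Nonempty
        · -- main case
          have hcard' : A.card + (B.erase q).card ≤ n := by
            rw [Finset.card_erase_of_mem hq]
            have : 1 ≤ B.card := Finset.card_pos.mpr hBne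
            omega
          have hXB' : ∀ x ∈ B.erase q, 0 < Xf u v c x :=
            fun x hx => hXB x (Finset.mem_of_mem_erase hx)
          have hsub : A ∪ B.erase q ⊆ A ∪ B :=
            Finset.union_subset_union_right (Finset.erase_subset q B)
          have hgp' : ∀ a ∈ A ∪ B.erase q, ∀ b ∈ A ∪ B.erase q, ∀ e ∈ A ∪ B.erase q,
              a ≠ b → a ≠ e → b ≠ e → ccw a b e ≠ 0 :=
            fun a ha b hb e he => hgp a (hsub ha) b (hsub hb) e (hsub he)
          have hcard1 : 1 ≤ B.card := Finset.card_pos.mpr hBne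
          have hB'card : (B.erase q).card = B.card - 1 := Finset.card_erase_of_mem hq
          obtain ⟨l', hnd', hspan', hpar', hpl', hhd'⟩ :=
            IH A (B.erase q) true hcard' hXA hXB' hgp'
              (by intro _; constructor <;> omega)
              (by intro h; exact absurd h (by simp))
          obtain ⟨r, s, hm', hhead⟩ := hhd' hA hB'
          simp only [if_true] at hhead
          have hl'0 : l'[0]! = r := head?_getElem! hhead
          have hl'len : 0 < l'.length := by
            cases l' with
            | nil => simp at hhead
            | cons a t => simp
          have hbel := maxP_below u v c hk hXA hXB' hgp' hm'
          have hrA := hm'.1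
          have hsB' := hm'.2.1
          have hcov : ∀ t ∈ A ∪ B, t = q ∨ t ∈ A ∪ B.erase q := by
            intro t ht
            rcases Finset.mem_union.mp ht with htA | htB
            · exact Or.inr (Finset.mem_union_left _ htA)
            · by_cases htq : t = q
              · exact Or.inl htq
              · exact Or.inr (Finset.mem_union_right _ (Finset.mem_erase.mpr ⟨htq, htB⟩))
          have hqr : q ≠ r := Ne.symm (hxy_ne r hrA q hq)
          have hqs : q ≠ s := Ne.symm (Finset.mem_erase.mp hsB').1
          have habove : 0 < ccw r s q :=
            maxP_above u v c hk hXA hXB (le_refl A) (Finset.erase_subset q B) hgp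
              hm hm' (Or.inr rfl) hcov hqr hqs hbel
          have hspanmem : ∀ i, i < l'.length → l'[i]! ∈ A ∪ B.erase q :=
            fun i hi => getElem!_mem_span hspan' hi
          have hqnotin : q ∉ l' := by
            intro hmem
            have hx := Set.ext_iff.mp hspan' q
            simp only [Set.mem_setOf_eq, Finset.mem_coe] at hx
            rcases Finset.mem_union.mp (hx.mp hmem) with h1 | h1
            · exact hxy_ne q h1 q hq rfl
            · exact (Finset.mem_erase.mp h1).1 rfl
          have hTle : ∀ i, i < l'.length → ccw r s l'[i]! ≤ 0 := by
            intro i hi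
            by_cases h1 : l'[i]! = r
            · rw [h1, ccw_self_left]
            · by_cases h2 : l'[i]! = s
              · rw [h2, ccw_self_right]
              · exact le_of_lt (hbel l'[i]! (hspanmem i hi) h1 h2)
          have hwne : ∀ i, i < l'.length → q ≠ l'[i]! := by
            intro i hi h
            apply hqnotin
            rw [h, getElem!_pos l' i hi]
            exact List.getElem_mem hi
          have hmemT : ∀ i, i < l'.length → l'[i]! ∈ A ∪ B :=
            fun i hi => hsub (hspanmem i hi)
          have hplcons : PlaneList (q :: l') :=
            planeList_cons hgp hpl' hnd' hmemT (Finset.mem_union_right _ hq) hTle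
              habove (by rw [hl'0, ccw_self_left]) hwne
          have hABins : A ∪ B = insert q (A ∪ B.erase q) := by
            rw [Finset.union_comm A (B.erase q), ← Finset.insert_union,
              Finset.insert_erase hq, Finset.union_comm B A]
          refine ⟨q :: l', ?_, ?_, ?_, hplcons, ?_⟩
          · exact List.nodup_cons.mpr ⟨hqnotin, hnd'⟩
          · ext x
            have hx := Set.ext_iff.mp hspan' x
            simp only [Set.mem_setOf_eq, Finset.mem_coe] at hx
            simp only [Set.mem_setOf_eq, List.mem_cons, hABins, Finset.coe_insert,
              Set.mem_insert_iff, Finset.mem_coe]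
            rw [hx]
          · intro i hi
            match i with
            | 0 =>
              constructor
              · intro _
                simp only [List.getElem!_cons_zero, Bool.false_eq_true, if_false]
                exact hq
              · intro h; omega
            | Nat.succ k =>
              simp only [List.length_cons] at hi
              have hk : k < l'.length := by omega
              obtain ⟨hpe, hpo⟩ := hpar' k hk
              constructor
              · intro hpar
                have hk1 : k % 2 = 1 := by omega
                simp only [List.getElem!_cons_succ, Bool.false_eq_true, if_false]
                have := hpo hk1
                simp only [if_true] at this
                exact Finset.mem_of_mem_erase this
              · intro hpar
                have hk0 : k % 2 = 0 := by omega
                simp only [List.getElem!_cons_succ, Bool.false_eq_true, if_false]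
                have := hpe hk0
                simp only [if_true] at this
                exact this
          · intro _ _
            exact ⟨p, q, hm, by simp⟩
        · -- B.erase q empty : B = {q}, A = {p}
          have hBe : B = {q} := by
            apply Finset.eq_singleton_iff_unique_mem.mpr
            refine ⟨hq, fun x hx => ?_⟩
            by_contra hxq
            exact hB' ⟨x, Finset.mem_erase.mpr ⟨hxq, hx⟩⟩
          have hAcard : A.card ≤ 1 := by
            rw [hBe] at hba; simpa using hba
          have hAe : A = {p} := by
            apply Finset.eq_singleton_iff_unique_mem.mpr
            refine ⟨hp, fun x hx => ?_⟩
            exact Finset.card_le_one.mp hAcard x hx p hp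
          refine ⟨[q, p], ?_, ?_, ?_, planeList_small (by simp), ?_⟩
          · simp [Ne.symm hpq]
          · rw [hAe, hBe]
            ext x
            simp [or_comm]
          · intro i hi
            simp only [List.length_cons, List.length_singleton] at hi
            match i with
            | 0 => exact ⟨fun _ => by simpa using hq, fun h => by omega⟩
            | 1 => exact ⟨fun h => by omega, fun _ => by simpa using hp⟩
          · intro _ _
            exact ⟨p, q, hm, by simp⟩
      · -- A empty
        have hAe : A = ∅ := Finset.not_nonempty_iff_eq_empty.mp hA
        rw [hAe] at hab
        simp only [Finset.card_empty, zero_add] at hab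
        by_cases hBe : B.Nonempty
        · obtain ⟨b, hBb⟩ := Finset.card_eq_one.mp
            (le_antisymm hab (Finset.card_pos.mpr hBe))
          refine ⟨[b], by simp, ?_, ?_, planeList_small (by simp), ?_⟩
          · rw [hAe, hBb]; ext x; simp
          · intro i hi
            simp only [List.length_singleton] at hi
            match i with
            | 0 => exact ⟨fun _ => by simp [hBb], fun h => by omega⟩
          · intro h1 _
            rw [hAe] at h1
            exact absurd h1 (by simp)
        · have hBe' : B = ∅ := Finset.not_nonempty_iff_eq_empty.mp hBe
          refine ⟨[], by simp, by simp [hAe, hBe'], by simp,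
            planeList_small (by simp), ?_⟩
          intro h1 _
          rw [hAe] at h1
          exact absurd h1 (by simp)

end

end ZigZagAux


lemma zigzag_small {S S₁ S₂ : Finset Pt} (hcard : S.card ≤ 1) :
    ∃ l, ZigZag S S₁ S₂ l := by
  by_cases h : S = ∅
  · refine ⟨[], ⟨⟨by simp, by simp [h]⟩, ZigZagAux.planeList_small (by simp)⟩, ?_⟩
    intro i hi
    exact absurd hi (by simp)
  · obtain ⟨x, hx⟩ := Finset.card_eq_one.mp
      (le_antisymm hcard (Finset.card_pos.mpr (Finset.nonempty_of_ne_empty h)))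
    refine ⟨[x], ⟨⟨by simp, by rw [hx]; ext y; simp⟩,
      ZigZagAux.planeList_small (by simp)⟩, ?_⟩
    intro i hi
    simp only [List.length_singleton] at hi
    omega

theorem stmt_7 (S S₁ S₂ : Finset Pt) (hgp : GenPos (S : Set Pt))
    (hbsp : BSP S S₁ S₂) :
    ∃ l : List Pt, ZigZag S S₁ S₂ l := by
  obtain ⟨hunion, hdisj, hc1, hc2, hhull⟩ := hbsp
  have hgpu : ∀ a ∈ S₁ ∪ S₂, ∀ b ∈ S₁ ∪ S₂, ∀ e ∈ S₁ ∪ S₂,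
      a ≠ b → a ≠ e → b ≠ e → ccw a b e ≠ 0 := by
    intro a ha b hb e he hab hae hbe h0
    rw [hunion] at ha hb he
    exact hgp a (Finset.mem_coe.mpr ha) b (Finset.mem_coe.mpr hb) e (Finset.mem_coe.mpr he)
      hab hae hbe (ZigZagAux.collinear_of_ccw_eq_zero h0)
  by_cases h1 : S₁.Nonempty
  · by_cases h2 : S₂.Nonempty
    · -- main case: separate the hulls
      obtain ⟨f, a0, b0, hfa, hab0, hfb⟩ :=
        geometric_hahn_banach_compact_closed (convex_convexHull ℝ _)
          ((S₁.finite_toSet).isCompact_convexHull ℝ) (convex_convexHull ℝ _)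
          ((S₂.finite_toSet).isCompact_convexHull ℝ).isClosed hhull
      have hf : ∀ p : Pt, f p = f (1,0) * p.1 + f (0,1) * p.2 := by
        intro p
        have hp : (p : Pt) = p.1 • ((1:ℝ),(0:ℝ)) + p.2 • ((0:ℝ),(1:ℝ)) := by
          ext <;> simp
        conv_lhs => rw [hp]
        rw [map_add, map_smul, map_smul, smul_eq_mul, smul_eq_mul]
        ring
      set u := f (1,0) with hu
      set v := f (0,1) with hv
      set c := (a0 + b0)/2 with hc
      have hXA : ∀ x ∈ S₁, ZigZagAux.Xf u v c x < 0 := by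
        intro x hx
        have hfx := hfa x (subset_convexHull ℝ _ (Finset.mem_coe.mpr hx))
        have hfe := hf x
        simp only [ZigZagAux.Xf]
        rw [← hfe]
        simp only [hc]
        linarith
      have hXB : ∀ x ∈ S₂, 0 < ZigZagAux.Xf u v c x := by
        intro x hx
        have hfx := hfb x (subset_convexHull ℝ _ (Finset.mem_coe.mpr hx))
        have hfe := hf x
        simp only [ZigZagAux.Xf]
        rw [← hfe]
        simp only [hc]
        linarith
      have hk : 0 < u^2 + v^2 := by
        obtain ⟨x, hx⟩ := h1
        obtain ⟨y, hy⟩ := h2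
        rcases eq_or_ne u 0 with h | h
        · rcases eq_or_ne v 0 with h' | h'
          · exfalso
            have hfx := hfa x (subset_convexHull ℝ _ (Finset.mem_coe.mpr hx))
            have hfy := hfb y (subset_convexHull ℝ _ (Finset.mem_coe.mpr hy))
            have e1 := hf x
            have e2 := hf y
            rw [h, h'] at e1 e2
            simp at e1 e2
            linarith
          · have := pow_two_pos_of_ne_zero h'
            nlinarith [sq_nonneg u]
        · have := pow_two_pos_of_ne_zero h
          nlinarith [sq_nonneg v]
      have hbal1 : S₁.card ≤ S₂.card + 1 := by omega
      have hbal2 : S₂.card ≤ S₁.card + 1 := by omega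
      by_cases hst : S₂.card ≤ S₁.card
      · obtain ⟨l, hnd, hspan, hpar, hpl, _⟩ :=
          ZigZagAux.core u v c hk (S₁.card + S₂.card) S₁ S₂ true le_rfl hXA hXB hgpu
            (fun _ => ⟨hst, hbal1⟩) (fun h => by simp at h)
        refine ⟨l, ⟨⟨hnd, ?_⟩, hpl⟩, ?_⟩
        · rw [hspan, hunion]
        · intro i hi
          obtain ⟨he1, ho1⟩ := hpar i (by omega)
          obtain ⟨he2, ho2⟩ := hpar (i+1) hi
          by_cases hp2 : i % 2 = 0
          · exact Or.inl ⟨by simpa using he1 hp2, by simpa using ho2 (by omega)⟩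
          · exact Or.inr ⟨by simpa using ho1 (by omega), by simpa using he2 (by omega)⟩
      · obtain ⟨l, hnd, hspan, hpar, hpl, _⟩ :=
          ZigZagAux.core u v c hk (S₁.card + S₂.card) S₁ S₂ false le_rfl hXA hXB hgpu
            (fun h => by simp at h) (fun _ => ⟨by omega, hbal2⟩)
        refine ⟨l, ⟨⟨hnd, ?_⟩, hpl⟩, ?_⟩
        · rw [hspan, hunion]
        · intro i hi
          obtain ⟨he1, ho1⟩ := hpar i (by omega)
          obtain ⟨he2, ho2⟩ := hpar (i+1) hi
          by_cases hp2 : i % 2 = 0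
          · exact Or.inr ⟨by simpa using he1 hp2, by simpa using ho2 (by omega)⟩
          · exact Or.inl ⟨by simpa using ho1 (by omega), by simpa using he2 (by omega)⟩
    · -- S₂ empty
      have h2' : S₂ = ∅ := Finset.not_nonempty_iff_eq_empty.mp h2
      apply zigzag_small
      have hcard2 : S₂.card = 0 := by simp [h2']
      have : S.card = S₁.card := by rw [← hunion, h2', Finset.union_empty]
      omega
  · -- S₁ empty
    have h1' : S₁ = ∅ := Finset.not_nonempty_iff_eq_empty.mp h1
    apply zigzag_small
    have hcard1 : S₁.card = 0 := by simp [h1']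
    have : S.card = S₂.card := by rw [← hunion, h1', Finset.empty_union]
    omega
end
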